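/- arXiv:1001.2755 — 7 statements merged into one kernel-verified Lean document; each statement's English description precedes it below -/
import Mathlib

section
/- Let H1, H2 be Hilbert spaces, S a weak-* closed subspace of B(H1), and T ∈ B(H1 ⊗ H2). If for every weak-* continuous functional ω on B(H2) the left slice L_ω(T) belongs to S, then T belongs to the weak-* closed subspace of B(H1 ⊗ H2) generated by elementary tensors A ⊗ B with A ∈ S, B ∈ B(H2). -/
set_option linter.unusedSectionVars false
set_option maxHeartbeats 1000000


noncomputable section

/-- The weak-* closed linear span of a set of operators on a Hilbert space,
described via annihilating (finite sums of) vector functionals; for linear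
subspaces this coincides with the weak-* (= weak operator topology) closure. -/
def wspan {E : Type*} [NormedAddCommGroup E] [InnerProductSpace ℂ E]
    (S : Set (E →L[ℂ] E)) : Set (E →L[ℂ] E) :=
  {T | ∀ (n : ℕ) (x y : Fin n → E),
    (∀ A ∈ S, (∑ i, (inner ℂ (A (x i)) (y i) : ℂ)) = 0) →
      (∑ i, (inner ℂ (T (x i)) (y i) : ℂ)) = 0}

/-- The reflexive hull of a set of operators. -/
def RefHull {E : Type*} [NormedAddCommGroup E] [InnerProductSpace ℂ E]
    (S : Set (E →L[ℂ] E)) : Set (E →L[ℂ] E) :=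
  {T | ∀ x y : E, (∀ A ∈ S, (inner ℂ (A x) y : ℂ) = 0) → (inner ℂ (T x) y : ℂ) = 0}

/-- An identification of the Hilbert space `H` with the Hilbert-space tensor
product `H1 ⊗ H2`: a bilinear map on vectors whose range spans a dense subspace,
multiplicative on inner products, together with the induced tensor product of
operators. -/
structure TensorSetup (H1 H2 H : Type*)
    [NormedAddCommGroup H1] [InnerProductSpace ℂ H1]
    [NormedAddCommGroup H2] [InnerProductSpace ℂ H2]
    [NormedAddCommGroup H] [InnerProductSpace ℂ H] where
  t : H1 →ₗ[ℂ] H2 →ₗ[ℂ] H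
  inner_t : ∀ ξ η x y, (inner ℂ (t ξ x) (t η y) : ℂ) = (inner ℂ ξ η : ℂ) * (inner ℂ x y : ℂ)
  dense_t : (Submodule.span ℂ {z | ∃ ξ x, z = t ξ x}).topologicalClosure = ⊤
  top : (H1 →L[ℂ] H1) → (H2 →L[ℂ] H2) → (H →L[ℂ] H)
  top_apply : ∀ A B ξ x, top A B (t ξ x) = t (A ξ) (B x)

/-- The reflexive hull relative to elementary tensors, `Ref_e`. -/
def RefE {H1 H2 H : Type*} [NormedAddCommGroup H1] [InnerProductSpace ℂ H1]
    [NormedAddCommGroup H2] [InnerProductSpace ℂ H2]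
    [NormedAddCommGroup H] [InnerProductSpace ℂ H]
    (ts : TensorSetup H1 H2 H) (S : Set (H →L[ℂ] H)) : Set (H →L[ℂ] H) :=
  {T | ∀ (ξ η : H1) (x y : H2),
    (∀ A ∈ S, (inner ℂ (A (ts.t ξ x)) (ts.t η y) : ℂ) = 0) →
      (inner ℂ (T (ts.t ξ x)) (ts.t η y) : ℂ) = 0}

variable {H1 H2 H : Type*}
  [NormedAddCommGroup H1] [InnerProductSpace ℂ H1] [CompleteSpace H1]
  [NormedAddCommGroup H2] [InnerProductSpace ℂ H2] [CompleteSpace H2]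
  [NormedAddCommGroup H] [InnerProductSpace ℂ H] [CompleteSpace H]

namespace KrausAux

open InnerProductSpace

local notation "⟪" x ", " y "⟫" => (inner ℂ x y : ℂ)

variable {H1 H2 H : Type*}
  [NormedAddCommGroup H1] [InnerProductSpace ℂ H1] [CompleteSpace H1]
  [NormedAddCommGroup H2] [InnerProductSpace ℂ H2] [CompleteSpace H2]
  [NormedAddCommGroup H] [InnerProductSpace ℂ H] [CompleteSpace H]

lemma norm_t (ts : TensorSetup H1 H2 H) (ξ : H1) (x : H2) : ‖ts.t ξ x‖ = ‖ξ‖ * ‖x‖ := by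
  have h := ts.inner_t ξ ξ x x
  rw [inner_self_eq_norm_sq_to_K, inner_self_eq_norm_sq_to_K, inner_self_eq_norm_sq_to_K] at h
  have h2 : ‖ts.t ξ x‖ ^ 2 = ‖ξ‖ ^ 2 * ‖x‖ ^ 2 := by exact_mod_cast h
  nlinarith [norm_nonneg (ts.t ξ x), norm_nonneg ξ, norm_nonneg x,
    mul_nonneg (norm_nonneg ξ) (norm_nonneg x)]

/-- The right-slice coefficient: the vector `slice ts w x ∈ H1` with
`⟪slice ts w x, ζ⟫ = ⟪w, t ζ x⟫` for all `ζ`. -/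
def slice (ts : TensorSetup H1 H2 H) (w : H) (x : H2) : H1 :=
  (InnerProductSpace.toDual ℂ H1).symm <|
    LinearMap.mkContinuous
      { toFun := fun ζ => ⟪w, ts.t ζ x⟫
        map_add' := fun a b => by
          simp only [map_add, LinearMap.add_apply, inner_add_right]
        map_smul' := fun c a => by
          simp only [map_smul, LinearMap.smul_apply, inner_smul_right, RingHom.id_apply, smul_eq_mul] }
      (‖w‖ * ‖x‖)
      (fun ζ => by
        simp only [LinearMap.coe_mk, AddHom.coe_mk]
        calc ‖⟪w, ts.t ζ x⟫‖ ≤ ‖w‖ * ‖ts.t ζ x‖ := norm_inner_le_norm _ _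
        _ = ‖w‖ * ‖x‖ * ‖ζ‖ := by rw [norm_t]; ring)

lemma inner_slice (ts : TensorSetup H1 H2 H) (w : H) (x : H2) (ζ : H1) :
    ⟪slice ts w x, ζ⟫ = ⟪w, ts.t ζ x⟫ := by
  rw [slice, InnerProductSpace.toDual_symm_apply]
  rfl

lemma hasSum_inner_right {ι : Type*} {f : ι → H} {a : H} (hf : HasSum f a) (z : H) :
    HasSum (fun i => ⟪z, f i⟫) ⟪z, a⟫ := by
  simpa [Function.comp_def] using hf.map (innerSL ℂ z) (innerSL ℂ z).continuous

lemma hasSum_inner_left {ι : Type*} {f : ι → H} {a : H} (hf : HasSum f a) (z : H) :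
    HasSum (fun i => ⟪f i, z⟫) ⟪a, z⟫ := by
  have h2 := (hasSum_inner_right hf z).map (starRingEnd ℂ)
    (by simpa [starRingEnd_apply] using (continuous_star : Continuous (star : ℂ → ℂ)))
  have h3 : ((⇑(starRingEnd ℂ) ∘ fun i => ⟪z, f i⟫) = fun i => ⟪f i, z⟫) := by
    funext i; simp [Function.comp, inner_conj_symm]
  rw [h3] at h2
  simpa using h2

lemma expansion (ts : TensorSetup H1 H2 H) {ι : Type} [Encodable ι] (w : ι → H) :
    ∃ e : ℕ → H2, (∀ k l, k ≠ l → ⟪e k, e l⟫ = 0) ∧ (∀ k, e k = 0 ∨ ‖e k‖ = 1) ∧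
      ∀ j, HasSum (fun k => ts.t (slice ts (w j) (e k)) (e k)) (w j) := by
  classical
  set D : Set H := {z | ∃ ξ x, z = ts.t ξ x} with hD
  have hdense : Dense ((Submodule.span ℂ D : Submodule ℂ H) : Set H) :=
    Submodule.dense_iff_topologicalClosure_eq_top.mpr ts.dense_t
  have happ : ∀ (j : ι) (m : ℕ), ∃ p, p ∈ Submodule.span ℂ D ∧ ‖w j - p‖ < 1 / (m + 1) := by
    intro j m
    obtain ⟨p, hp1, hp2⟩ := Metric.mem_closure_iff.mp (hdense.closure_eq ▸ Set.mem_univ (w j))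
      (1 / (m + 1)) (by positivity)
    exact ⟨p, hp1, by rwa [dist_eq_norm] at hp2⟩
  choose p hpmem hpclose using happ
  have hrep : ∀ j m, ∃ (N : ℕ) (a : Fin N → ℂ) (ξ' : Fin N → H1) (x' : Fin N → H2),
      ∑ i, a i • ts.t (ξ' i) (x' i) = p j m := by
    intro j m
    obtain ⟨N, a, g, hg⟩ := Submodule.mem_span_set'.mp (hpmem j m)
    refine ⟨N, a, fun i => (g i).2.choose, fun i => (g i).2.choose_spec.choose, ?_⟩
    have : ∀ i, ts.t ((g i).2.choose) ((g i).2.choose_spec.choose) = (g i : H) := fun i =>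
      ((g i).2.choose_spec.choose_spec).symm
    simp_rw [this]
    exact hg
  choose N a ξ' x' hx'rep using hrep
  -- enumerate all second legs
  let σ : Type := Σ jm : ι × ℕ, Fin (N jm.1 jm.2)
  let c : ℕ → H2 := fun k =>
    match Encodable.decode (α := σ) k with
    | some s => x' s.1.1 s.1.2 s.2
    | none => 0
  set e : ℕ → H2 := gramSchmidtNormed ℂ c with he
  have horth : ∀ k l, k ≠ l → ⟪e k, e l⟫ = 0 := by
    intro k l hkl
    rw [he]
    simp only [gramSchmidtNormed, inner_smul_left, inner_smul_right]
    rw [gramSchmidt_orthogonal ℂ c hkl]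
    ring
  have hnorm : ∀ k, e k = 0 ∨ ‖e k‖ = 1 := by
    intro k
    by_cases h : e k = 0
    · exact Or.inl h
    · exact Or.inr (gramSchmidtNormed_unit_length' h)
  -- the subspaces
  set W : ℕ → Submodule ℂ H := fun k => LinearMap.range ((ts.t).flip (e k)) with hW
  set V : Submodule ℂ H := ⨆ k, W k with hV
  have hxV : ∀ (ξ0 : H1) (x : H2), x ∈ Submodule.span ℂ (Set.range e) → ts.t ξ0 x ∈ V := by
    intro ξ0 x hx
    induction hx using Submodule.span_induction with
    | mem z hz =>
      obtain ⟨k, rfl⟩ := hz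
      exact Submodule.mem_iSup_of_mem k ⟨ξ0, rfl⟩
    | zero => rw [map_zero]; exact V.zero_mem
    | add x y hx hy ihx ihy => rw [map_add]; exact V.add_mem ihx ihy
    | smul b x hx ih => rw [map_smul]; exact V.smul_mem b ih
  have hcspan : ∀ k, c k ∈ Submodule.span ℂ (Set.range e) := by
    intro k
    have h1 : c k ∈ Submodule.span ℂ (gramSchmidt ℂ c '' Set.Iic k) :=
      mem_span_gramSchmidt ℂ c le_rfl
    rw [← span_gramSchmidtNormed] at h1
    exact Submodule.span_mono (Set.image_subset_range _ _) h1
  have hpV : ∀ j m, p j m ∈ V := by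
    intro j m
    rw [← hx'rep j m]
    refine Submodule.sum_mem _ fun i _ => Submodule.smul_mem _ _ (hxV _ _ ?_)
    have hck : c (Encodable.encode (⟨(j, m), i⟩ : σ)) = x' j m i := by
      simp only [c, Encodable.encodek]
    rw [← hck]
    exact hcspan _
  have hwcl : ∀ j, w j ∈ closure (V : Set H) := by
    intro j
    rw [Metric.mem_closure_iff]
    intro ε hε
    obtain ⟨m, hm⟩ := exists_nat_one_div_lt hε
    exact ⟨p j m, hpV j m, by rw [dist_eq_norm]; exact (hpclose j m).trans hm⟩
  refine ⟨e, horth, hnorm, ?_⟩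
  intro j
  set ξk : ℕ → H1 := fun k => slice ts (w j) (e k) with hξk
  -- orthogonality of the residual
  have hproj : ∀ (F : Finset ℕ) (q : H), q ∈ (⨆ k ∈ F, W k) →
      ⟪w j - ∑ k ∈ F, ts.t (ξk k) (e k), q⟫ = 0 := by
    intro F q hq
    set d : H := w j - ∑ k ∈ F, ts.t (ξk k) (e k) with hd
    have : (⨆ k ∈ F, W k) ≤ LinearMap.ker (innerSL ℂ d).toLinearMap := by
      refine iSup₂_le fun k hk => ?_
      rintro z ⟨ζ, rfl⟩
      have hz : ((ts.t).flip (e k)) ζ = ts.t ζ (e k) := rfl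
      rw [LinearMap.mem_ker]
      show ⟪d, ts.t ζ (e k)⟫ = 0
      rw [hd, inner_sub_left, sum_inner]
      have hterm : ∀ k' ∈ F, ⟪ts.t (ξk k') (e k'), ts.t ζ (e k)⟫ =
          if k' = k then ⟪ξk k, ζ⟫ * ⟪e k, e k⟫ else 0 := by
        intro k' _
        rw [ts.inner_t]
        by_cases hkk : k' = k
        · subst hkk; simp
        · rw [horth k' k hkk, mul_zero, if_neg hkk]
      rw [Finset.sum_congr rfl hterm, Finset.sum_ite_eq' F k _, if_pos hk]
      rcases hnorm k with h0 | h1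
      · simp [h0]
      · have : ⟪e k, e k⟫ = 1 := by
          rw [inner_self_eq_norm_sq_to_K, h1]; norm_num
        rw [this, mul_one, hξk, inner_slice, sub_self]
    exact this hq
  rw [HasSum]
  rw [SummationFilter.unconditional_filter, Metric.tendsto_atTop]
  intro ε hε
  obtain ⟨q, hqV, hqclose⟩ := Metric.mem_closure_iff.mp (hwcl j) ε hε
  rw [dist_eq_norm] at hqclose
  obtain ⟨F0, hF0⟩ := Submodule.exists_finset_of_mem_iSup W hqV
  refine ⟨F0, fun F hF => ?_⟩
  set SF : H := ∑ k ∈ F, ts.t (ξk k) (e k) with hSF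
  have hSFmem : SF ∈ ⨆ k ∈ F, W k := by
    refine Submodule.sum_mem _ fun k hk => ?_
    have : W k ≤ ⨆ k ∈ F, W k := le_iSup₂ (f := fun k _ => W k) k hk
    exact this ⟨ξk k, rfl⟩
  have hqmem : q ∈ ⨆ k ∈ F, W k := by
    have : (⨆ k ∈ F0, W k) ≤ ⨆ k ∈ F, W k := biSup_mono hF
    exact this hF0
  have horthq : ⟪w j - SF, SF - q⟫ = 0 := hproj F _ (Submodule.sub_mem _ hSFmem hqmem)
  have hpyth : ‖w j - q‖ ^ 2 = ‖w j - SF‖ ^ 2 + ‖SF - q‖ ^ 2 := by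
    have hdecomp : w j - q = (w j - SF) + (SF - q) := by abel
    rw [hdecomp, @norm_add_sq ℂ _ _ _ _ (w j - SF) (SF - q), horthq]
    simp
  rw [dist_eq_norm]
  have h1 : ‖SF - w j‖ = ‖w j - SF‖ := norm_sub_rev _ _
  rw [h1]
  nlinarith [norm_nonneg (w j - SF), norm_nonneg (SF - q), norm_nonneg (w j - q), hε]

end KrausAux

/-- Kraus's slice-map lemma: if every left slice of `T` by a weak-* continuous
(normal) functional on `B(H2)` lies in the weak-* closed subspace `S ⊆ B(H1)`,
then `T` lies in `S ⊗ B(H2)`.  A normal functional on `B(H2)` is precisely one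
of the form `B ↦ ∑' i, ⟪B (x i), y i⟫` with `∑ ‖x i‖² < ∞`, `∑ ‖y i‖² < ∞`. -/


theorem stmt0_kraus_slice_lemma
    (ts : TensorSetup H1 H2 H)
    (S : Submodule ℂ (H1 →L[ℂ] H1))
    (hS : wspan (S : Set (H1 →L[ℂ] H1)) = (S : Set (H1 →L[ℂ] H1)))
    (T : H →L[ℂ] H)
    (hT : ∀ x y : ℕ → H2, Summable (fun i => ‖x i‖ ^ 2) → Summable (fun i => ‖y i‖ ^ 2) →
      ∃ A ∈ S, ∀ ξ η : H1,
        (inner ℂ (A ξ) η : ℂ) = ∑' i, (inner ℂ (T (ts.t ξ (x i))) (ts.t η (y i)) : ℂ)) :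
    T ∈ wspan {X | ∃ A ∈ S, ∃ B : H2 →L[ℂ] H2, X = ts.top A B} := by
  
  classical
  intro n u v hann
  have hslice : ∀ x y : H2, ∃ A ∈ S, ∀ ξ' η' : H1,
      (inner ℂ (A ξ') η' : ℂ) = (inner ℂ (T (ts.t ξ' x)) (ts.t η' y) : ℂ) := by
    intro x y
    obtain ⟨A, hA, h⟩ := hT (fun i => if i = 0 then x else 0) (fun i => if i = 0 then y else 0)
      (summable_of_ne_finset_zero (s := {0}) (fun b hb => by
        simp only [Finset.mem_singleton] at hb; simp [hb]))
      (summable_of_ne_finset_zero (s := {0}) (fun b hb => by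
        simp only [Finset.mem_singleton] at hb; simp [hb]))
    refine ⟨A, hA, fun ξ' η' => ?_⟩
    rw [h ξ' η', tsum_eq_single 0]
    · simp
    · intro b hb
      simp [hb]
  obtain ⟨e, horth, hnorm, hsum⟩ := KrausAux.expansion ts (Sum.elim u v)
  set ξ : Fin n ⊕ Fin n → ℕ → H1 :=
    fun j k => KrausAux.slice ts (Sum.elim u v j) (e k) with hξ
  have hsumu : ∀ j : Fin n, HasSum (fun k => ts.t (ξ (.inl j) k) (e k)) (u j) :=
    fun j => hsum (.inl j)
  have hsumv : ∀ j : Fin n, HasSum (fun k => ts.t (ξ (.inr j) k) (e k)) (v j) :=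
    fun j => hsum (.inr j)
  have hstep1 : ∀ j : Fin n,
      HasSum (fun k => (inner ℂ (T (ts.t (ξ (.inl j) k) (e k))) (v j) : ℂ))
        (inner ℂ (T (u j)) (v j) : ℂ) := by
    intro j
    have h := (hsumu j).map T T.continuous
    exact KrausAux.hasSum_inner_left h (v j)
  have hstep2 : ∀ (z : H) (j : Fin n),
      HasSum (fun l => (inner ℂ z (ts.t (ξ (.inr j) l) (e l)) : ℂ)) (inner ℂ z (v j) : ℂ) :=
    fun z j => KrausAux.hasSum_inner_right (hsumv j) z
  set c : Fin n → ℕ → ℕ → ℂ := fun j k l =>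
    inner ℂ (T (ts.t (ξ (.inl j) k) (e k))) (ts.t (ξ (.inr j) l) (e l)) with hc
  have hzero : ∀ k l, ∑ j : Fin n, c j k l = 0 := by
    intro k l
    rcases hnorm k with hk | hk
    · exact Finset.sum_eq_zero fun j _ => by simp [hc, hk]
    rcases hnorm l with hl | hl
    · exact Finset.sum_eq_zero fun j _ => by simp [hc, hl]
    obtain ⟨A, hA, hAeq⟩ := hslice (e k) (e l)
    set B : H2 →L[ℂ] H2 := (innerSL ℂ (e k)).smulRight (e l) with hB
    have hekk : (inner ℂ (e k) (e k) : ℂ) = 1 := by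
      rw [inner_self_eq_norm_sq_to_K, hk]; norm_num
    have hell : (inner ℂ (e l) (e l) : ℂ) = 1 := by
      rw [inner_self_eq_norm_sq_to_K, hl]; norm_num
    have hBk : B (e k) = e l := by simp [hB, hekk, hk]
    have hB0 : ∀ k', k' ≠ k → B (e k') = 0 := by
      intro k' h
      simp [hB, horth k k' (Ne.symm h)]
    have h0 := hann (ts.top A B) ⟨A, hA, B, rfl⟩
    have hterm : ∀ j : Fin n, (inner ℂ ((ts.top A B) (u j)) (v j) : ℂ) = c j k l := by
      intro j
      have h1 : HasSum (fun k' => ts.t (A (ξ (.inl j) k')) (B (e k')))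
          ((ts.top A B) (u j)) := by
        have h1' := (hsumu j).map (ts.top A B) (ts.top A B).continuous
        have heq : (⇑(ts.top A B) ∘ fun k' => ts.t (ξ (.inl j) k') (e k')) =
            fun k' => ts.t (A (ξ (.inl j) k')) (B (e k')) := by
          funext k'; simp [Function.comp, ts.top_apply]
        rwa [heq] at h1'
      have h2 := KrausAux.hasSum_inner_left h1 (v j)
      have h3 : (inner ℂ ((ts.top A B) (u j)) (v j) : ℂ) =
          (inner ℂ (ts.t (A (ξ (.inl j) k)) (e l)) (v j) : ℂ) := by
        rw [← h2.tsum_eq, tsum_eq_single k]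
        · rw [hBk]
        · intro k' hk'
          rw [hB0 k' hk']
          simp
      rw [h3, ← (hstep2 (ts.t (A (ξ (.inl j) k)) (e l)) j).tsum_eq, tsum_eq_single l]
      · rw [ts.inner_t, hell, mul_one, hAeq]
      · intro l' hl'
        rw [ts.inner_t, horth l l' (Ne.symm hl'), mul_zero]
    calc ∑ j : Fin n, c j k l
        = ∑ j : Fin n, (inner ℂ ((ts.top A B) (u j)) (v j) : ℂ) :=
          Finset.sum_congr rfl fun j _ => (hterm j).symm
      _ = 0 := h0
  calc ∑ j : Fin n, (inner ℂ (T (u j)) (v j) : ℂ)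
      = ∑ j : Fin n, ∑' k, (inner ℂ (T (ts.t (ξ (.inl j) k) (e k))) (v j) : ℂ) :=
        Finset.sum_congr rfl fun j _ => ((hstep1 j).tsum_eq).symm
    _ = ∑' k, ∑ j : Fin n, (inner ℂ (T (ts.t (ξ (.inl j) k) (e k))) (v j) : ℂ) :=
        (Summable.tsum_finsetSum fun j _ => (hstep1 j).summable).symm
    _ = 0 := by
        have hk : ∀ k : ℕ,
            (∑ j : Fin n, (inner ℂ (T (ts.t (ξ (.inl j) k) (e k))) (v j) : ℂ)) = 0 := by
          intro k
          calc ∑ j : Fin n, (inner ℂ (T (ts.t (ξ (.inl j) k) (e k))) (v j) : ℂ)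
              = ∑ j : Fin n, ∑' l, c j k l :=
                Finset.sum_congr rfl fun j _ =>
                  ((hstep2 (T (ts.t (ξ (.inl j) k) (e k))) j).tsum_eq).symm
            _ = ∑' l, ∑ j : Fin n, c j k l :=
                (Summable.tsum_finsetSum fun j _ => (hstep2 (T (ts.t (ξ (.inl j) k) (e k))) j).summable).symm
            _ = 0 := by simp [hzero]
        simp only [hk]
        exact tsum_zero
end
end

section
/- Let H1, H2 be Hilbert spaces and U ⊆ B(H1), V ⊆ B(H2) be subspaces. Then Ref_e(U ⊗ V) = (B(H1) ⊗ Ref V) ∩ (Ref U ⊗ B(H2)). -/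
noncomputable section

variable {H1 H2 H : Type*}
  [NormedAddCommGroup H1] [InnerProductSpace ℂ H1] [CompleteSpace H1]
  [NormedAddCommGroup H2] [InnerProductSpace ℂ H2] [CompleteSpace H2]
  [NormedAddCommGroup H] [InnerProductSpace ℂ H] [CompleteSpace H]

section Aux

set_option linter.unusedSectionVars false

local notation "⟪" x ", " y "⟫" => @inner ℂ _ _ x y

/-- The rank-one operator `v ↦ ⟪ξ, v⟫ • η`. -/
def rkOne (ξ η : H1) : H1 →L[ℂ] H1 := (innerSL ℂ ξ).smulRight η

@[simp] lemma rkOne_apply (ξ η v : H1) : rkOne ξ η v = (⟪ξ, v⟫ : ℂ) • η := rfl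

namespace TensorSetup

variable (ts : TensorSetup H1 H2 H)

lemma norm_t (ξ : H1) (x : H2) : ‖ts.t ξ x‖ = ‖ξ‖ * ‖x‖ := by
  have h : (⟪ts.t ξ x, ts.t ξ x⟫ : ℂ) = (⟪ξ, ξ⟫ : ℂ) * ⟪x, x⟫ := ts.inner_t ξ ξ x x
  rw [inner_self_eq_norm_sq_to_K, inner_self_eq_norm_sq_to_K, inner_self_eq_norm_sq_to_K] at h
  have h2 : (‖ts.t ξ x‖ : ℝ) ^ 2 = (‖ξ‖ * ‖x‖) ^ 2 := by
    have := h
    push_cast at this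
    exact_mod_cast by rw [mul_pow]; exact_mod_cast this
  nlinarith [norm_nonneg (ts.t ξ x), norm_nonneg ξ, norm_nonneg x,
    mul_nonneg (norm_nonneg ξ) (norm_nonneg x)]

/-- `x ↦ t ξ x` as a continuous linear map. -/
def L (ξ : H1) : H2 →L[ℂ] H :=
  LinearMap.mkContinuous (ts.t ξ) ‖ξ‖ (fun x => by rw [norm_t])

@[simp] lemma L_apply (ξ : H1) (x : H2) : ts.L ξ x = ts.t ξ x := rfl

/-- `ξ ↦ t ξ x` as a continuous linear map. -/
def M (x : H2) : H1 →L[ℂ] H :=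
  LinearMap.mkContinuous (ts.t.flip x) ‖x‖ (fun ξ => by
    simp only [LinearMap.flip_apply]
    rw [norm_t, mul_comm])

@[simp] lemma M_apply (x : H2) (ξ : H1) : ts.M x ξ = ts.t ξ x := rfl

/-- The adjoint of `L ξ`. -/
def R (ξ : H1) : H →L[ℂ] H2 := ContinuousLinearMap.adjoint (ts.L ξ)

lemma inner_R_left (ξ : H1) (z : H) (y : H2) : (⟪ts.R ξ z, y⟫ : ℂ) = ⟪z, ts.t ξ y⟫ :=
  ContinuousLinearMap.adjoint_inner_left (ts.L ξ) y z

lemma inner_R_right (ξ : H1) (z : H) (y : H2) : (⟪y, ts.R ξ z⟫ : ℂ) = ⟪ts.t ξ y, z⟫ :=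
  ContinuousLinearMap.adjoint_inner_right (ts.L ξ) y z

lemma R_t (ξ ζ : H1) (x : H2) : ts.R ξ (ts.t ζ x) = (⟪ξ, ζ⟫ : ℂ) • x := by
  apply ext_inner_right ℂ
  intro y
  rw [inner_R_left, ts.inner_t, inner_smul_left, inner_conj_symm]

/-- A continuous linear map vanishing on elementary tensors vanishes. -/
lemma clm_eq_zero {W : Type*} [NormedAddCommGroup W] [NormedSpace ℂ W]
    (f : H →L[ℂ] W) (h : ∀ ζ x, f (ts.t ζ x) = 0) : ∀ z, f z = 0 := by
  intro z
  have hspan : Submodule.span ℂ {z | ∃ ξ x, z = ts.t ξ x} ≤ LinearMap.ker (f : H →ₗ[ℂ] W) := by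
    rw [Submodule.span_le]
    rintro v ⟨ζ, x, rfl⟩
    exact h ζ x
  have hcl : (Submodule.span ℂ {z | ∃ ξ x, z = ts.t ξ x}).topologicalClosure ≤
      LinearMap.ker (f : H →ₗ[ℂ] W) := by
    apply Submodule.topologicalClosure_minimal _ hspan
    exact ContinuousLinearMap.isClosed_ker f
  rw [ts.dense_t] at hcl
  exact hcl (Submodule.mem_top)

/-- Elementary case of the projection expansion. -/
lemma hasSum_proj_elem {κ : Type*} (e : HilbertBasis κ ℂ H1) (ζ : H1) (x : H2) :
    HasSum (fun k => ts.t (e k) (ts.R (e k) (ts.t ζ x))) (ts.t ζ x) := by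
  have h0 : HasSum (fun k => (e.repr ζ k) • (e k)) ζ := e.hasSum_repr ζ
  have h1 := h0.mapL (ts.M x)
  have : (fun k => ts.M x ((e.repr ζ k) • (e k))) =
      fun k => ts.t (e k) (ts.R (e k) (ts.t ζ x)) := by
    funext k
    rw [ts.R_t]
    simp only [M_apply, map_smul, HilbertBasis.repr_apply_apply]
  rwa [this] at h1

lemma bessel {κ : Type*} (e : HilbertBasis κ ℂ H1) (z : H) (F : Finset κ) :
    ∑ k ∈ F, ‖ts.R (e k) z‖ ^ 2 ≤ ‖z‖ ^ 2 := by
  classical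
  set u := ∑ k ∈ F, ts.t (e k) (ts.R (e k) z) with hu
  set S := ∑ k ∈ F, ‖ts.R (e k) z‖ ^ 2 with hS
  have huz : (⟪u, z⟫ : ℂ) = (S : ℝ) := by
    rw [hu, sum_inner, hS]
    push_cast
    refine Finset.sum_congr rfl fun k _ => ?_
    rw [← ts.inner_R_right, inner_self_eq_norm_sq_to_K]
    norm_num
  have huu : (⟪u, u⟫ : ℂ) = (S : ℝ) := by
    rw [hu, sum_inner]
    have : ∀ k ∈ F, (⟪ts.t (e k) (ts.R (e k) z), u⟫ : ℂ) = ((‖ts.R (e k) z‖ : ℝ) ^ 2 : ℝ) := by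
      intro k hk
      rw [hu, inner_sum]
      have : ∀ l ∈ F, (⟪ts.t (e k) (ts.R (e k) z), ts.t (e l) (ts.R (e l) z)⟫ : ℂ)
          = if k = l then (⟪ts.R (e k) z, ts.R (e l) z⟫ : ℂ) else 0 := by
        intro l _
        rw [ts.inner_t, orthonormal_iff_ite.mp e.orthonormal k l]
        by_cases h : k = l <;> simp [h]
      rw [Finset.sum_congr rfl this, Finset.sum_ite_eq F k, if_pos hk,
        inner_self_eq_norm_sq_to_K]
      norm_num
    rw [Finset.sum_congr rfl this, hS]
    push_cast
    ring
  have hnu : ‖u‖ ^ 2 = S := by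
    have h' := huu
    rw [inner_self_eq_norm_sq_to_K] at h'
    have h'' : ((‖u‖ ^ 2 : ℝ) : ℂ) = ((S : ℝ) : ℂ) := by push_cast; exact h'
    exact_mod_cast h''
  have hre : RCLike.re (⟪z, u⟫ : ℂ) = S := by
    rw [← inner_conj_symm, huz]
    simp
  have h0 : (0 : ℝ) ≤ ‖z - u‖ ^ 2 := sq_nonneg _
  rw [@norm_sub_sq ℂ] at h0
  rw [hre, hnu] at h0
  linarith

lemma hasSum_proj {κ : Type*} (e : HilbertBasis κ ℂ H1) (z : H) :
    HasSum (fun k => ts.t (e k) (ts.R (e k) z)) z := by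
  have hsq : Summable (fun k => ‖ts.R (e k) z‖ ^ 2) :=
    summable_of_sum_le (fun k => sq_nonneg _) (fun F => ts.bessel e z F)
  set Vi : ∀ _ : κ, H2 →ₗᵢ[ℂ] H := fun k =>
    { toLinearMap := ts.t (e k)
      norm_map' := fun x => by rw [ts.norm_t, e.orthonormal.1 k, one_mul] } with hVi
  have hOF : OrthogonalFamily ℂ (fun _ : κ => H2) Vi := by
    intro k l hkl x y
    show (⟪ts.t (e k) x, ts.t (e l) y⟫ : ℂ) = 0
    rw [ts.inner_t, e.orthonormal.2 hkl, zero_mul]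
  have hsummable : Summable (fun k => Vi k (ts.R (e k) z)) :=
    (hOF.summable_iff_norm_sq_summable _).2 hsq
  obtain ⟨s, hs⟩ := hsummable
  have hs' : HasSum (fun k => ts.t (e k) (ts.R (e k) z)) s := hs
  suffices hzs : z = s by rw [← hzs] at hs'; exact hs'
  have key : ∀ ζ x, (⟪z - s, ts.t ζ x⟫ : ℂ) = 0 := by
    intro ζ x
    have h1 : HasSum (fun k => (⟪ts.t ζ x, ts.t (e k) (ts.R (e k) z)⟫ : ℂ)) ⟪ts.t ζ x, s⟫ :=
      hs'.mapL (innerSL ℂ (ts.t ζ x))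
    have h2 : HasSum (fun k => (⟪z, ts.t (e k) (ts.R (e k) (ts.t ζ x))⟫ : ℂ)) ⟪z, ts.t ζ x⟫ :=
      (ts.hasSum_proj_elem e ζ x).mapL (innerSL ℂ z)
    have h3 := h2.map (starAddEquiv : ℂ ≃+ ℂ).toAddMonoidHom continuous_star
    have hterm : (fun k => (starAddEquiv : ℂ ≃+ ℂ).toAddMonoidHom
          ((⟪z, ts.t (e k) (ts.R (e k) (ts.t ζ x))⟫ : ℂ)))
        = fun k => (⟪ts.t ζ x, ts.t (e k) (ts.R (e k) z)⟫ : ℂ) := by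
      funext k
      show (starRingEnd ℂ) (⟪z, ts.t (e k) (ts.R (e k) (ts.t ζ x))⟫ : ℂ) = _
      rw [inner_conj_symm, ← ts.inner_R_right, ← ts.inner_R_left]
    have h3' : HasSum (fun k => (⟪ts.t ζ x, ts.t (e k) (ts.R (e k) z)⟫ : ℂ))
        ((starAddEquiv : ℂ ≃+ ℂ).toAddMonoidHom (⟪z, ts.t ζ x⟫ : ℂ)) := by
      rw [← hterm]; exact h3
    have heq : (⟪ts.t ζ x, s⟫ : ℂ) = (starAddEquiv : ℂ ≃+ ℂ).toAddMonoidHom (⟪z, ts.t ζ x⟫ : ℂ) :=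
      h1.unique h3'
    have heq2 : (⟪ts.t ζ x, s⟫ : ℂ) = ⟪ts.t ζ x, z⟫ := by
      rw [heq]; exact inner_conj_symm _ _
    have : (⟪ts.t ζ x, z - s⟫ : ℂ) = 0 := by rw [inner_sub_right, ← heq2, sub_self]
    rw [← inner_conj_symm, this, map_zero]
  have hz : ∀ v, innerSL ℂ (z - s) v = 0 :=
    ts.clm_eq_zero (innerSL ℂ (z - s)) (fun ζ x => key ζ x)
  have := hz (z - s)
  simp only [innerSL_apply_apply, inner_self_eq_zero] at this
  rw [sub_eq_zero] at this
  exact this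

/-- The slice identity for rank-one operators in the first leg. -/
lemma inner_top_rkOne (ξ η : H1) (B : H2 →L[ℂ] H2) (z w : H) :
    (⟪w, ts.top (rkOne ξ η) B z⟫ : ℂ) = ⟪ts.R η w, B (ts.R ξ z)⟫ := by
  have h : ∀ v, ((innerSL ℂ w).comp (ts.top (rkOne ξ η) B) -
      (innerSL ℂ (ts.R η w)).comp (B.comp (ts.R ξ))) v = 0 := by
    apply ts.clm_eq_zero
    intro ζ x
    simp only [ContinuousLinearMap.coe_sub', Pi.sub_apply, ContinuousLinearMap.coe_comp',
      Function.comp_apply, innerSL_apply_apply]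
    rw [ts.top_apply, ts.R_t, rkOne_apply, map_smul, LinearMap.smul_apply, map_smul,
      inner_smul_right, inner_smul_right]
    rw [← ts.inner_R_left]
    ring
  have := h z
  simp only [ContinuousLinearMap.coe_sub', Pi.sub_apply, ContinuousLinearMap.coe_comp',
    Function.comp_apply, innerSL_apply_apply] at this
  exact sub_eq_zero.mp this

/-- The key "slice map" lemma: if all `H1`-slices of `T` lie in `Ref V`, then
`T` belongs to the WOT-closed span of `B(H1) ⊗ Ref V`. -/
lemma hard (V : Submodule ℂ (H2 →L[ℂ] H2)) (T : H →L[ℂ] H)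
    (hT : ∀ (ξ η : H1) (x y : H2), (∀ B ∈ V, (⟪B x, y⟫ : ℂ) = 0) →
      (⟪T (ts.t ξ x), ts.t η y⟫ : ℂ) = 0) :
    T ∈ wspan {X | ∃ A : H1 →L[ℂ] H1, ∃ B ∈ RefHull (V : Set (H2 →L[ℂ] H2)), X = ts.top A B} := by
  intro n z w hann
  obtain ⟨κs, e, -⟩ := exists_hilbertBasis ℂ H1
  set Bkl : κs → κs → H2 →L[ℂ] H2 :=
    fun k l => (ts.R (e l)).comp (T.comp (ts.L (e k))) with hBkl
  have hBmem : ∀ k l, Bkl k l ∈ RefHull (V : Set (H2 →L[ℂ] H2)) := by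
    intro k l x y hxy
    show (⟪ts.R (e l) (T (ts.L (e k) x)), y⟫ : ℂ) = 0
    rw [ts.inner_R_left]
    exact hT (e k) (e l) x y hxy
  have step1 : ∀ k l,
      ∑ i, (⟪w i, ts.t (e l) (ts.R (e l) (T (ts.t (e k) (ts.R (e k) (z i)))))⟫ : ℂ) = 0 := by
    intro k l
    have h0 := hann (ts.top (rkOne (e k) (e l)) (Bkl k l))
      ⟨rkOne (e k) (e l), Bkl k l, hBmem k l, rfl⟩
    have h0' : ∑ i, (⟪w i, ts.top (rkOne (e k) (e l)) (Bkl k l) (z i)⟫ : ℂ) = 0 := by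
      have hc := congrArg (starRingEnd ℂ) h0
      rw [map_sum, map_zero] at hc
      simpa only [inner_conj_symm] using hc
    rw [← h0']
    refine Finset.sum_congr rfl fun i _ => ?_
    rw [ts.inner_top_rkOne]
    show (⟪w i, ts.t (e l) (ts.R (e l) (T (ts.t (e k) (ts.R (e k) (z i)))))⟫ : ℂ)
      = ⟪ts.R (e l) (w i), ts.R (e l) (T (ts.t (e k) (ts.R (e k) (z i))))⟫
    rw [ts.inner_R_left]
  have step2 : ∀ k, ∑ i, (⟪w i, T (ts.t (e k) (ts.R (e k) (z i)))⟫ : ℂ) = 0 := by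
    intro k
    have hsum : ∀ i ∈ (Finset.univ : Finset (Fin n)),
        HasSum (fun l => (⟪w i, ts.t (e l) (ts.R (e l) (T (ts.t (e k) (ts.R (e k) (z i)))))⟫ : ℂ))
          (⟪w i, T (ts.t (e k) (ts.R (e k) (z i)))⟫ : ℂ) := fun i _ =>
      (ts.hasSum_proj e _).mapL (innerSL ℂ (w i))
    have htot := hasSum_sum hsum
    have hfz : (fun l => ∑ i,
        (⟪w i, ts.t (e l) (ts.R (e l) (T (ts.t (e k) (ts.R (e k) (z i)))))⟫ : ℂ))
        = fun _ => (0 : ℂ) := funext fun l => step1 k l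
    rw [hfz] at htot
    exact (htot.unique hasSum_zero)
  have step3 : ∑ i, (⟪w i, T (z i)⟫ : ℂ) = 0 := by
    have hsum : ∀ i ∈ (Finset.univ : Finset (Fin n)),
        HasSum (fun k => (⟪w i, T (ts.t (e k) (ts.R (e k) (z i)))⟫ : ℂ))
          (⟪w i, T (z i)⟫ : ℂ) := fun i _ =>
      ((ts.hasSum_proj e (z i)).mapL T).mapL (innerSL ℂ (w i))
    have htot := hasSum_sum hsum
    have hfz : (fun k => ∑ i, (⟪w i, T (ts.t (e k) (ts.R (e k) (z i)))⟫ : ℂ))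
        = fun _ => (0 : ℂ) := funext step2
    rw [hfz] at htot
    exact htot.unique hasSum_zero
  have hc := congrArg (starRingEnd ℂ) step3
  rw [map_sum, map_zero] at hc
  simpa only [inner_conj_symm] using hc

/-- Swapping the two legs of a tensor setup. -/
def swap : TensorSetup H2 H1 H where
  t := ts.t.flip
  inner_t x y ξ η := by
    simp only [LinearMap.flip_apply]
    rw [ts.inner_t, mul_comm]
  dense_t := by
    have hset : {z | ∃ x ξ, z = ts.t.flip x ξ} = {z | ∃ ξ x, z = ts.t ξ x} := by
      ext v
      constructor
      · rintro ⟨x, ξ, rfl⟩; exact ⟨ξ, x, rfl⟩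
      · rintro ⟨ξ, x, rfl⟩; exact ⟨x, ξ, rfl⟩
    rw [hset]
    exact ts.dense_t
  top B A := ts.top A B
  top_apply B A x ξ := ts.top_apply A B ξ x

end TensorSetup

end Aux

local notation "⟪" x ", " y "⟫" => @inner ℂ _ _ x y

/-- Lemma on the elementary reflexive hull of a tensor product of subspaces:
`Ref_e (U ⊗ V) = (B(H1) ⊗ Ref V) ∩ (Ref U ⊗ B(H2))`. -/
theorem stmt2_refE_fubini
    (ts : TensorSetup H1 H2 H)
    (U : Submodule ℂ (H1 →L[ℂ] H1)) (V : Submodule ℂ (H2 →L[ℂ] H2)) :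
    RefE ts (wspan {X | ∃ A ∈ U, ∃ B ∈ V, X = ts.top A B}) =
      wspan {X | ∃ A : H1 →L[ℂ] H1, ∃ B ∈ RefHull (V : Set (H2 →L[ℂ] H2)), X = ts.top A B} ∩
      wspan {X | ∃ A ∈ RefHull (U : Set (H1 →L[ℂ] H1)), ∃ B : H2 →L[ℂ] H2, X = ts.top A B} := by
  ext T
  constructor
  · intro hR
    constructor
    · apply ts.hard V T
      intro ξ η x y hxy
      apply hR ξ η x y
      intro S hS
      have h1 := hS 1 (fun _ => ts.t ξ x) (fun _ => ts.t η y) ?_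
      · simpa using h1
      · rintro X ⟨A, hA, B, hB, rfl⟩
        simp only [Fin.sum_univ_one]
        rw [ts.top_apply, ts.inner_t, hxy B hB, mul_zero]
    · have hyp : ∀ (x y : H2) (ξ η : H1),
          (∀ A ∈ U, (⟪A ξ, η⟫ : ℂ) = 0) →
          (⟪T ((ts.swap).t x ξ), (ts.swap).t y η⟫ : ℂ) = 0 := by
        intro x y ξ η hξη
        show (⟪T (ts.t ξ x), ts.t η y⟫ : ℂ) = 0
        apply hR ξ η x y
        intro S hS
        have h1 := hS 1 (fun _ => ts.t ξ x) (fun _ => ts.t η y) ?_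
        · simpa using h1
        · rintro X ⟨A, hA, B, hB, rfl⟩
          simp only [Fin.sum_univ_one]
          rw [ts.top_apply, ts.inner_t, hξη A hA, zero_mul]
      have h2 := (ts.swap).hard U T hyp
      have hset : {X | ∃ A ∈ RefHull (U : Set (H1 →L[ℂ] H1)), ∃ B : H2 →L[ℂ] H2, X = ts.top A B}
          = {X | ∃ B : H2 →L[ℂ] H2, ∃ A ∈ RefHull (U : Set (H1 →L[ℂ] H1)),
              X = (ts.swap).top B A} := by
        ext X
        constructor
        · rintro ⟨A, hA, B, rfl⟩; exact ⟨B, A, hA, rfl⟩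
        · rintro ⟨B, A, hA, rfl⟩; exact ⟨A, hA, B, rfl⟩
      rw [hset]
      exact h2
  · rintro ⟨h1, h2⟩
    intro ξ η x y hxy
    have hgen : ∀ A ∈ U, ∀ B ∈ V, (⟪A ξ, η⟫ : ℂ) * ⟪B x, y⟫ = 0 := by
      intro A hA B hB
      have hX : ts.top A B ∈ wspan {X | ∃ A ∈ U, ∃ B ∈ V, X = ts.top A B} := by
        intro m a b hab
        exact hab _ ⟨A, hA, B, hB, rfl⟩
      have h := hxy _ hX
      rwa [ts.top_apply, ts.inner_t] at h
    by_cases hc : ∀ B ∈ V, (⟪B x, y⟫ : ℂ) = 0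
    · have h := h1 1 (fun _ => ts.t ξ x) (fun _ => ts.t η y) ?_
      · simpa using h
      · rintro X ⟨A, B, hB, rfl⟩
        simp only [Fin.sum_univ_one]
        rw [ts.top_apply, ts.inner_t, hB x y hc, mul_zero]
    · push_neg at hc
      obtain ⟨B0, hB0, hB0'⟩ := hc
      have hU : ∀ A ∈ U, (⟪A ξ, η⟫ : ℂ) = 0 := by
        intro A hA
        rcases mul_eq_zero.mp (hgen A hA B0 hB0) with h | h
        · exact h
        · exact absurd h hB0'
      have h := h2 1 (fun _ => ts.t ξ x) (fun _ => ts.t η y) ?_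
      · simpa using h
      · rintro X ⟨A, hA, B, rfl⟩
        simp only [Fin.sum_univ_one]
        rw [ts.top_apply, ts.inner_t, hA ξ η hU, zero_mul]
end
end

section
/- Let H1, H2 be Hilbert spaces, A ∈ B(H1) nonzero, and V ⊆ B(H2) a subspace. Then Ref_e(A ⊗ V) = A ⊗ Ref V, where A ⊗ V denotes {A ⊗ B : B ∈ V}. -/
noncomputable section

variable {H1 H2 H : Type*}
  [NormedAddCommGroup H1] [InnerProductSpace ℂ H1] [CompleteSpace H1]
  [NormedAddCommGroup H2] [InnerProductSpace ℂ H2] [CompleteSpace H2]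
  [NormedAddCommGroup H] [InnerProductSpace ℂ H] [CompleteSpace H]

lemma sesq_factor' {E : Type*} [AddCommGroup E] [Module ℂ E]
    (K F : E → E → ℂ)
    (hK1 : ∀ (a : ℂ) ξ ξ' η, K (ξ - a • ξ') η = K ξ η - (starRingEnd ℂ a) * K ξ' η)
    (hK2 : ∀ (a : ℂ) ξ η η', K ξ (η - a • η') = K ξ η - a * K ξ η')
    (hF1 : ∀ (a : ℂ) ξ ξ' η, F (ξ - a • ξ') η = F ξ η - (starRingEnd ℂ a) * F ξ' η)
    (hF2 : ∀ (a : ℂ) ξ η η', F ξ (η - a • η') = F ξ η - a * F ξ η')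
    (h0 : ∀ ξ η, K ξ η = 0 → F ξ η = 0)
    (ξ₀ η₀ : E) (hξ₀ : K ξ₀ η₀ = 1) :
    ∀ ξ η, F ξ η = K ξ η * F ξ₀ η₀ := by
  have step1 : ∀ ξ η η', K ξ η' ≠ 0 → F ξ η * K ξ η' = K ξ η * F ξ η' := by
    intro ξ η η' h
    have hk : K ξ (η - (K ξ η / K ξ η') • η') = 0 := by
      rw [hK2]; field_simp; ring
    have hf := h0 _ _ hk
    rw [hF2, sub_eq_zero] at hf
    rw [hf]; field_simp
  have step3 : ∀ ξ η', K ξ η' ≠ 0 → K ξ₀ η' ≠ 0 → F ξ η' * K ξ₀ η' = K ξ η' * F ξ₀ η' := by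
    intro ξ η' h h0'
    have hk : K (ξ - (starRingEnd ℂ (K ξ η' / K ξ₀ η')) • ξ₀) η' = 0 := by
      rw [hK1]; simp; field_simp; ring
    have hf := h0 _ _ hk
    rw [hF1, sub_eq_zero] at hf
    simp only [RingHomCompTriple.comp_apply, Complex.conj_conj, RingHom.id_apply] at hf
    rw [hf]; field_simp
  intro ξ η
  by_cases hkξη : K ξ η = 0
  · rw [hkξη, h0 _ _ hkξη, zero_mul]
  · have h00 : K ξ₀ η₀ ≠ 0 := by rw [hξ₀]; exact one_ne_zero
    obtain ⟨η', h1, h2⟩ : ∃ η', K ξ η' ≠ 0 ∧ K ξ₀ η' ≠ 0 := by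
      by_cases hb : K ξ₀ η ≠ 0
      · exact ⟨η, hkξη, hb⟩
      by_cases hc : K ξ η₀ ≠ 0
      · exact ⟨η₀, hc, h00⟩
      push_neg at hb hc
      refine ⟨η - (-1 : ℂ) • η₀, ?_, ?_⟩
      · rw [hK2, hc]; simpa using hkξη
      · rw [hK2, hb, hξ₀]; norm_num
    have e1 := step1 ξ η η' h1
    have e2 := step3 ξ η' h1 h2
    have e3 := step1 ξ₀ η' η₀ h00
    rw [hξ₀, mul_one] at e3
    rw [e3] at e2
    have e4 : F ξ η' = K ξ η' * F ξ₀ η₀ :=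
      mul_right_cancel₀ h2 (by rw [e2]; ring)
    rw [e4] at e1
    exact mul_right_cancel₀ h1 (by rw [e1]; ring)

/-- For a nonzero `A ∈ B(H1)` and a subspace `V ⊆ B(H2)`,
`Ref_e (A ⊗ V) = A ⊗ Ref V`, where `A ⊗ V = {A ⊗ B : B ∈ V}`. -/
theorem stmt3_refE_singleton_tensor
    (ts : TensorSetup H1 H2 H)
    (A : H1 →L[ℂ] H1) (hA : A ≠ 0)
    (V : Submodule ℂ (H2 →L[ℂ] H2)) :
    RefE ts {X | ∃ B ∈ V, X = ts.top A B} =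
      {X | ∃ B ∈ RefHull (V : Set (H2 →L[ℂ] H2)), X = ts.top A B} := by
  -- basic facts
  have hdense : Dense ((Submodule.span ℂ {z | ∃ ξ x, z = ts.t ξ x} : Submodule ℂ H) : Set H) :=
    Submodule.dense_iff_topologicalClosure_eq_top.mpr ts.dense_t
  obtain ⟨ξ₀, hξ₀⟩ : ∃ ξ₀, A ξ₀ ≠ 0 := by
    by_contra h
    push_neg at h
    exact hA (by ext ξ; simp [h ξ])
  set η₀ : H1 := ((‖A ξ₀‖ : ℂ)^2)⁻¹ • A ξ₀ with hη₀def
  have hAnz : ((‖A ξ₀‖ : ℂ)^2) ≠ 0 := by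
    simp only [ne_eq, pow_eq_zero_iff, Complex.ofReal_eq_zero, norm_eq_zero]
    simp [hξ₀]
  have hζ : (inner ℂ (A ξ₀) η₀ : ℂ) = 1 := by
    rw [hη₀def, inner_smul_right]
    rw [show (inner ℂ (A ξ₀) (A ξ₀) : ℂ) = (‖A ξ₀‖ : ℂ)^2 from by exact_mod_cast inner_self_eq_norm_sq_to_K (A ξ₀)]
    exact inv_mul_cancel₀ hAnz
  -- the norm of elementary tensors
  have hnorm : ∀ (ξ : H1) (x : H2), ‖ts.t ξ x‖ = ‖ξ‖ * ‖x‖ := by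
    intro ξ x
    have h := ts.inner_t ξ ξ x x
    rw [show (inner ℂ (ts.t ξ x) (ts.t ξ x) : ℂ) = (‖ts.t ξ x‖ : ℂ)^2 from by exact_mod_cast inner_self_eq_norm_sq_to_K _,
        show (inner ℂ ξ ξ : ℂ) = (‖ξ‖ : ℂ)^2 from by exact_mod_cast inner_self_eq_norm_sq_to_K _,
        show (inner ℂ x x : ℂ) = (‖x‖ : ℂ)^2 from by exact_mod_cast inner_self_eq_norm_sq_to_K _] at h
    have h2 : (‖ts.t ξ x‖)^2 = (‖ξ‖ * ‖x‖)^2 := by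
      have : ((‖ts.t ξ x‖ : ℝ) : ℂ)^2 = ((‖ξ‖ * ‖x‖ : ℝ) : ℂ)^2 := by push_cast; rw [h]; ring
      exact_mod_cast this
    nlinarith [norm_nonneg (ts.t ξ x), norm_nonneg ξ, norm_nonneg x,
      mul_nonneg (norm_nonneg ξ) (norm_nonneg x)]
  -- continuous linear version of t ξ
  let L : H1 → (H2 →L[ℂ] H) := fun ξ =>
    LinearMap.mkContinuous (ts.t ξ) ‖ξ‖ (fun x => le_of_eq (hnorm ξ x))
  have hL : ∀ ξ x, L ξ x = ts.t ξ x := fun ξ x => rfl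
  ext T
  constructor
  · -- hard direction
    intro hT
    -- the candidate operator B'
    set B' : H2 →L[ℂ] H2 :=
      (ContinuousLinearMap.adjoint (L η₀)).comp (T.comp (L ξ₀)) with hB'def
    have hB'inner : ∀ x y, (inner ℂ (B' x) y : ℂ) = inner ℂ (T (ts.t ξ₀ x)) (ts.t η₀ y) := by
      intro x y
      rw [hB'def]
      simp only [ContinuousLinearMap.comp_apply]
      rw [ContinuousLinearMap.adjoint_inner_left]
      rw [hL, hL]
    -- the factorization
    have key : ∀ (x y : H2) (ξ η : H1),
        (inner ℂ (T (ts.t ξ x)) (ts.t η y) : ℂ) = inner ℂ (A ξ) η * inner ℂ (B' x) y := by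
      intro x y
      have := sesq_factor' (fun ξ η => (inner ℂ (A ξ) η : ℂ))
        (fun ξ η => (inner ℂ (T (ts.t ξ x)) (ts.t η y) : ℂ))
        (by intro a ξ ξ' η; simp [inner_sub_left, inner_smul_left]; ring)
        (by intro a ξ η η'; simp [inner_sub_right, inner_smul_right])
        (by intro a ξ ξ' η
            simp [map_sub, map_smul, LinearMap.sub_apply, LinearMap.smul_apply,
              inner_sub_left, inner_smul_left]; ring)
        (by intro a ξ η η'
            simp [map_sub, map_smul, LinearMap.sub_apply, LinearMap.smul_apply,
              inner_sub_right, inner_smul_right])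
        (by intro ξ η hk
            have hk' : (inner ℂ (A ξ) η : ℂ) = 0 := hk
            refine hT ξ η x y ?_
            rintro X ⟨B, hB, rfl⟩
            rw [ts.top_apply, ts.inner_t, hk', zero_mul])
        ξ₀ η₀ hζ
      intro ξ η
      have h2 : (inner ℂ (T (ts.t ξ x)) (ts.t η y) : ℂ)
          = inner ℂ (A ξ) η * inner ℂ (T (ts.t ξ₀ x)) (ts.t η₀ y) := this ξ η
      rw [h2, hB'inner]
    -- B' is in the reflexive hull of V
    have hB'mem : B' ∈ RefHull (V : Set (H2 →L[ℂ] H2)) := by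
      intro x y hxy
      rw [hB'inner]
      refine hT ξ₀ η₀ x y ?_
      rintro X ⟨B, hB, rfl⟩
      rw [ts.top_apply, ts.inner_t, hxy B hB, mul_zero]
    -- T equals the elementary tensor A ⊗ B'
    have hTeq : T = ts.top A B' := by
      apply ContinuousLinearMap.ext_on hdense
      rintro z ⟨ξ, x, rfl⟩
      have hv : ∀ (η : H1) (y : H2),
          (inner ℂ (T (ts.t ξ x) - ts.top A B' (ts.t ξ x)) (ts.t η y) : ℂ) = 0 := by
        intro η y
        rw [inner_sub_left, key x y ξ η, ts.top_apply, ts.inner_t, sub_self]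
      have hfun : (innerSL ℂ (T (ts.t ξ x) - ts.top A B' (ts.t ξ x))) = 0 := by
        apply ContinuousLinearMap.ext_on hdense
        rintro z ⟨η, y, rfl⟩
        simp only [innerSL_apply_apply, ContinuousLinearMap.zero_apply]
        exact hv η y
      have hz : (inner ℂ (T (ts.t ξ x) - ts.top A B' (ts.t ξ x))
          (T (ts.t ξ x) - ts.top A B' (ts.t ξ x)) : ℂ) = 0 := by
        have h3 := congrFun (congrArg DFunLike.coe hfun) (T (ts.t ξ x) - ts.top A B' (ts.t ξ x))
        simp only [innerSL_apply_apply, ContinuousLinearMap.zero_apply] at h3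
        exact h3
      exact sub_eq_zero.mp (inner_self_eq_zero.mp hz)
    exact ⟨B', hB'mem, hTeq⟩
  · -- easy direction
    rintro ⟨B, hB, rfl⟩ ξ η x y hyp
    rw [ts.top_apply, ts.inner_t]
    by_cases hk : (inner ℂ (A ξ) η : ℂ) = 0
    · rw [hk, zero_mul]
    · have : (inner ℂ (B x) y : ℂ) = 0 := by
        apply hB
        intro B' hB'
        have := hyp (ts.top A B') ⟨B', hB', rfl⟩
        rw [ts.top_apply, ts.inner_t] at this
        exact (mul_eq_zero.mp this).resolve_left hk
      rw [this, mul_zero]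
end
end

section
/- Let H1, H2 be Hilbert spaces, S ⊆ B(H1 ⊗ H2) a subspace, and ω = ω_{ξ,η} a vector functional on B(H1). Then R_ω(Ref_e S) ⊆ Ref R_ω(S), where R_ω denotes the right slice map. -/
noncomputable section

variable {H1 H2 H : Type*}
  [NormedAddCommGroup H1] [InnerProductSpace ℂ H1] [CompleteSpace H1]
  [NormedAddCommGroup H2] [InnerProductSpace ℂ H2] [CompleteSpace H2]
  [NormedAddCommGroup H] [InnerProductSpace ℂ H] [CompleteSpace H]


/-- The map `x ↦ ts.t v x` as a continuous linear map. -/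
noncomputable def TensorSetup.tL
    {H1 H2 H : Type*}
    [NormedAddCommGroup H1] [InnerProductSpace ℂ H1]
    [NormedAddCommGroup H2] [InnerProductSpace ℂ H2]
    [NormedAddCommGroup H] [InnerProductSpace ℂ H]
    (ts : TensorSetup H1 H2 H) (v : H1) : H2 →L[ℂ] H :=
  LinearMap.mkContinuous (ts.t v) ‖v‖ (by
    intro x
    have h := ts.inner_t v v x x
    rw [inner_self_eq_norm_sq_to_K, inner_self_eq_norm_sq_to_K,
      inner_self_eq_norm_sq_to_K] at h
    have h2 : ‖ts.t v x‖ ^ 2 = ‖v‖ ^ 2 * ‖x‖ ^ 2 := by exact_mod_cast h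
    nlinarith [norm_nonneg (ts.t v x), mul_nonneg (norm_nonneg v) (norm_nonneg x)])

@[simp] theorem TensorSetup.tL_apply
    {H1 H2 H : Type*}
    [NormedAddCommGroup H1] [InnerProductSpace ℂ H1]
    [NormedAddCommGroup H2] [InnerProductSpace ℂ H2]
    [NormedAddCommGroup H] [InnerProductSpace ℂ H]
    (ts : TensorSetup H1 H2 H) (v : H1) (x : H2) : ts.tL v x = ts.t v x := rfl

/-- Slicing by a vector functional `ω = ω_{ξ,η}` maps `Ref_e S` into
`Ref R_ω(S)`.  Here `B` being the slice `R_ω(T)` is expressed by the defining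
identity `⟪B x, y⟫ = ⟪T(ξ⊗x), η⊗y⟫`. -/
theorem stmt4_slice_of_refE
    (ts : TensorSetup H1 H2 H)
    (S : Set (H →L[ℂ] H)) (ξ η : H1)
    (T : H →L[ℂ] H) (hT : T ∈ RefE ts S)
    (B : H2 →L[ℂ] H2)
    (hB : ∀ x y : H2, (inner ℂ (B x) y : ℂ) = (inner ℂ (T (ts.t ξ x)) (ts.t η y) : ℂ)) :
    B ∈ RefHull {C : H2 →L[ℂ] H2 | ∃ T' ∈ S, ∀ x y : H2,
        (inner ℂ (C x) y : ℂ) = (inner ℂ (T' (ts.t ξ x)) (ts.t η y) : ℂ)} := by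
  intro x y h
  rw [hB]
  apply hT ξ η x y
  intro A hA
  classical
  let C : H2 →L[ℂ] H2 :=
    (ContinuousLinearMap.adjoint (ts.tL η)).comp (A.comp (ts.tL ξ))
  have hC : ∀ x y : H2, (inner ℂ (C x) y : ℂ) = (inner ℂ (A (ts.t ξ x)) (ts.t η y) : ℂ) := by
    intro x y
    simp only [C, ContinuousLinearMap.comp_apply, ContinuousLinearMap.adjoint_inner_left,
      TensorSetup.tL_apply]
  have := h C ⟨A, hA, hC⟩
  rwa [hC] at this
end
end

section
/- Let P, Q be orthogonal projections on H1 ⊗ H2, and for a projection L let L̃ denote the projection onto the orthogonal complement of the closed span of {ξ ⊗ x : L(ξ ⊗ x) = 0}. Then Ref_e(Q·B(H1⊗H2)·P) = Q̃·B(H1⊗H2)·P̃. -/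
set_option linter.unusedSectionVars false
noncomputable section

variable {H1 H2 H : Type*}
  [NormedAddCommGroup H1] [InnerProductSpace ℂ H1] [CompleteSpace H1]
  [NormedAddCommGroup H2] [InnerProductSpace ℂ H2] [CompleteSpace H2]
  [NormedAddCommGroup H] [InnerProductSpace ℂ H] [CompleteSpace H]


lemma symm_inner' {A : H →L[ℂ] H} (hA : IsSelfAdjoint A) (u w : H) :
    (inner ℂ (A u) w : ℂ) = inner ℂ u (A w) := hA.isSymmetric u w

omit [CompleteSpace H] in
lemma inner_zero_of_closure' {u : H} {s : Set H}
    (h : ∀ z ∈ s, (inner ℂ u z : ℂ) = 0) {w : H}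
    (hw : w ∈ (Submodule.span ℂ s).topologicalClosure) : (inner ℂ u w : ℂ) = 0 := by
  have hk : Submodule.span ℂ s ≤ LinearMap.ker ((innerSL ℂ u : H →L[ℂ] ℂ) : H →ₗ[ℂ] ℂ) := by
    rw [Submodule.span_le]; intro z hz; simpa using h z hz
  have hc := Submodule.topologicalClosure_minimal _ hk (ContinuousLinearMap.isClosed_ker _)
  simpa using hc hw

omit [CompleteSpace H] in
lemma apply_zero_of_closure' (T : H →L[ℂ] H) {s : Set H}
    (h : ∀ z ∈ s, T z = 0) {w : H}
    (hw : w ∈ (Submodule.span ℂ s).topologicalClosure) : T w = 0 := by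
  have hk : Submodule.span ℂ s ≤ LinearMap.ker (T : H →ₗ[ℂ] H) := by
    rw [Submodule.span_le]; intro z hz; simpa using h z hz
  have hc := Submodule.topologicalClosure_minimal _ hk (ContinuousLinearMap.isClosed_ker _)
  simpa using hc hw

/-- For projections `P, Q` on `H1 ⊗ H2`, `Ref_e (Q B(H1⊗H2) P) = Q̃ B(H1⊗H2) P̃`,
where for a projection `L`, `L̃` is the orthogonal projection onto
`{ξ ⊗ x : L(ξ ⊗ x) = 0}ᗮ`; equivalently, `L̃` is the selfadjoint idempotent
whose kernel is the closed linear span of the elementary tensors killed by `L`. -/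
theorem stmt5_refE_corner
    (ts : TensorSetup H1 H2 H)
    (P Q Pt Qt : H →L[ℂ] H)
    (hP : IsSelfAdjoint P) (hP2 : P ∘L P = P)
    (hQ : IsSelfAdjoint Q) (hQ2 : Q ∘L Q = Q)
    (hPt : IsSelfAdjoint Pt) (hPt2 : Pt ∘L Pt = Pt)
    (hQt : IsSelfAdjoint Qt) (hQt2 : Qt ∘L Qt = Qt)
    (hPker : LinearMap.ker (Pt : H →ₗ[ℂ] H) =
      (Submodule.span ℂ {z | ∃ ξ x, z = ts.t ξ x ∧ P z = 0}).topologicalClosure)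
    (hQker : LinearMap.ker (Qt : H →ₗ[ℂ] H) =
      (Submodule.span ℂ {z | ∃ ξ x, z = ts.t ξ x ∧ Q z = 0}).topologicalClosure) :
    RefE ts {X | ∃ T : H →L[ℂ] H, X = Q ∘L T ∘L P} =
      {X | ∃ T : H →L[ℂ] H, X = Qt ∘L T ∘L Pt} := by
  ext X
  simp only [Set.mem_setOf_eq, RefE]
  constructor
  · intro hX
    refine ⟨X, ?_⟩
    have step1 : ∀ z ∈ {z : H | ∃ ξ x, z = ts.t ξ x ∧ P z = 0}, X z = 0 := by
      rintro z ⟨ξ, x, rfl, hPz⟩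
      have h0 : ∀ η y, (inner ℂ (X (ts.t ξ x)) (ts.t η y) : ℂ) = 0 := by
        intro η y
        apply hX ξ η x y
        rintro A ⟨T, rfl⟩
        simp [ContinuousLinearMap.comp_apply, hPz]
      have hz : (inner ℂ (X (ts.t ξ x)) (X (ts.t ξ x)) : ℂ) = 0 := by
        apply inner_zero_of_closure' (s := {z : H | ∃ ξ x, z = ts.t ξ x})
        · rintro w ⟨η, y, rfl⟩; exact h0 η y
        · rw [ts.dense_t]; trivial
      exact inner_self_eq_zero.mp hz
    have step2 : ∀ v ∈ LinearMap.ker (Pt : H →ₗ[ℂ] H), X v = 0 := by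
      intro v hv
      rw [hPker] at hv
      exact apply_zero_of_closure' X step1 hv
    have step3 : ∀ w ∈ {z : H | ∃ ξ x, z = ts.t ξ x ∧ Q z = 0},
        ∀ v : H, (inner ℂ (X v) w : ℂ) = 0 := by
      rintro w ⟨η, y, rfl, hQw⟩ v
      have he : ∀ ξ x, (inner ℂ (X (ts.t ξ x)) (ts.t η y) : ℂ) = 0 := by
        intro ξ x
        apply hX ξ η x y
        rintro A ⟨T, rfl⟩
        have hsym := symm_inner' hQ ((T ∘L P) (ts.t ξ x)) (ts.t η y)
        simp only [ContinuousLinearMap.comp_apply] at hsym ⊢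
        rw [hsym, hQw, inner_zero_right]
      have hF : (inner ℂ (ts.t η y) (X v) : ℂ) = 0 := by
        have hk : Submodule.span ℂ {z : H | ∃ ξ x, z = ts.t ξ x} ≤
            LinearMap.ker (((innerSL ℂ (ts.t η y)).comp X : H →L[ℂ] ℂ) : H →ₗ[ℂ] ℂ) := by
          rw [Submodule.span_le]
          rintro z ⟨ξ, x, rfl⟩
          simp only [SetLike.mem_coe, LinearMap.mem_ker, ContinuousLinearMap.coe_coe, ContinuousLinearMap.coe_comp',
            Function.comp_apply, innerSL_apply_apply]
          rw [← inner_conj_symm, he ξ x, map_zero]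
        have hc := Submodule.topologicalClosure_minimal _ hk
          (ContinuousLinearMap.isClosed_ker _)
        rw [ts.dense_t] at hc
        simpa using hc (Submodule.mem_top (x := v))
      rw [← inner_conj_symm, hF, map_zero]
    have h6 : ∀ v, Qt (X v) = X v := by
      intro v
      set d := X v - Qt (X v) with hd
      have hQtd : Qt d = 0 := by
        have := DFunLike.congr_fun hQt2 (X v)
        simp only [ContinuousLinearMap.comp_apply] at this
        simp [hd, map_sub, this]
      have hdk : d ∈ LinearMap.ker (Qt : H →ₗ[ℂ] H) := hQtd
      have h1 : (inner ℂ (X v) d : ℂ) = 0 := by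
        rw [hQker] at hdk
        exact inner_zero_of_closure' (fun z hz => step3 z hz v) hdk
      have h2 : (inner ℂ (Qt (X v)) d : ℂ) = 0 := by
        rw [symm_inner' hQt, hQtd, inner_zero_right]
      have hz : (inner ℂ d d : ℂ) = 0 := by
        rw [hd, inner_sub_left, h1, h2, sub_zero]
      have := inner_self_eq_zero.mp hz
      rw [hd] at this
      exact (sub_eq_zero.mp this).symm
    have h7 : ∀ v, X (Pt v) = X v := by
      intro v
      have hker : v - Pt v ∈ LinearMap.ker (Pt : H →ₗ[ℂ] H) := by
        have := DFunLike.congr_fun hPt2 v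
        simp only [ContinuousLinearMap.comp_apply] at this
        simp [LinearMap.mem_ker, map_sub, this]
      have := step2 _ hker
      rw [map_sub, sub_eq_zero] at this
      exact this.symm
    ext v
    simp only [ContinuousLinearMap.comp_apply]
    rw [h7, h6]
  · rintro ⟨T, rfl⟩ ξ η x y hAll
    have hkey : P (ts.t ξ x) = 0 ∨ Q (ts.t η y) = 0 := by
      by_contra hc
      push_neg at hc
      obtain ⟨hPz, hQw⟩ := hc
      have key := hAll (Q ∘L ((innerSL ℂ (P (ts.t ξ x))).smulRight (Q (ts.t η y))) ∘L P)
        ⟨_, rfl⟩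
      simp only [ContinuousLinearMap.comp_apply, ContinuousLinearMap.smulRight_apply,
        innerSL_apply_apply] at key
      rw [map_smul, inner_smul_left] at key
      have hQQ : Q (Q (ts.t η y)) = Q (ts.t η y) := by
        have := DFunLike.congr_fun hQ2 (ts.t η y)
        simpa using this
      rw [hQQ] at key
      have h2 : (inner ℂ (Q (ts.t η y)) (ts.t η y) : ℂ) =
          inner ℂ (Q (ts.t η y)) (Q (ts.t η y)) := by
        rw [symm_inner' hQ (ts.t η y) (ts.t η y),
          symm_inner' hQ (ts.t η y) (Q (ts.t η y)), hQQ]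
      rw [h2] at key
      rcases mul_eq_zero.mp key with h | h
      · exact (inner_self_ne_zero (𝕜 := ℂ)).mpr hPz (by simpa using congrArg (starRingEnd ℂ) h)
      · exact (inner_self_ne_zero (𝕜 := ℂ)).mpr hQw h
    rcases hkey with h | h
    · have hmem : ts.t ξ x ∈ LinearMap.ker (Pt : H →ₗ[ℂ] H) := by
        rw [hPker]
        exact Submodule.le_topologicalClosure _ (Submodule.subset_span ⟨ξ, x, rfl, h⟩)
      have : Pt (ts.t ξ x) = 0 := hmem
      simp [ContinuousLinearMap.comp_apply, this]
    · have hmem : ts.t η y ∈ LinearMap.ker (Qt : H →ₗ[ℂ] H) := by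
        rw [hQker]
        exact Submodule.le_topologicalClosure _ (Submodule.subset_span ⟨η, y, rfl, h⟩)
      have hQtw : Qt (ts.t η y) = 0 := hmem
      simp only [ContinuousLinearMap.comp_apply]
      rw [symm_inner' hQt, hQtw, inner_zero_right]
end
end

section
/- Let H = ℓ²(ℤ₊, K) for a Hilbert space K and let R be the isometric shift R(x_0, x_1, ...) = (0, x_0, x_1, ...). If A ∈ B(H) commutes with R, then the norm of A equals its essential norm: ‖A‖ = inf{‖A + C‖ : C compact}. In particular, no nonzero compact operator commutes with R. -/
noncomputable section

open Filter Topology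
open scoped InnerProductSpace ENNReal

namespace Stmt13Aux

variable {K : Type*} [NormedAddCommGroup K] [InnerProductSpace ℂ K] [CompleteSpace K]

lemma summable_sq (f : lp (fun _ : ℕ => K) 2) : Summable fun k => ‖f k‖ ^ 2 := by
  have h := (lp.memℓp f).summable (p := 2) (by norm_num)
  have : ∀ k : ℕ, ‖f k‖ ^ (2 : ℝ≥0∞).toReal = ‖f k‖ ^ 2 := by
    intro k
    norm_cast
  simpa [this] using h

lemma memℓp_of_summable_sq {f : ℕ → K} (h : Summable fun k => ‖f k‖ ^ 2) :
    Memℓp f (2 : ℝ≥0∞) := by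
  apply memℓp_gen
  have : ∀ k : ℕ, ‖f k‖ ^ (2 : ℝ≥0∞).toReal = ‖f k‖ ^ 2 := by
    intro k; norm_cast
  simpa [this] using h

lemma norm_sq_eq (f : lp (fun _ : ℕ => K) 2) : ‖f‖ ^ 2 = ∑' k, ‖f k‖ ^ 2 := by
  have h := lp.norm_rpow_eq_tsum (p := 2) (by norm_num) f
  calc ‖f‖ ^ 2 = ‖f‖ ^ (2 : ℝ≥0∞).toReal := by norm_cast
    _ = ∑' k, ‖f k‖ ^ (2 : ℝ≥0∞).toReal := h
    _ = ∑' k, ‖f k‖ ^ 2 := by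
        apply tsum_congr; intro k; norm_cast



section Main

set_option linter.unusedSectionVars false

variable (R : lp (fun _ : ℕ => K) 2 →L[ℂ] lp (fun _ : ℕ => K) 2)
  (hR0 : ∀ x : lp (fun _ : ℕ => K) 2, (R x) 0 = 0)
  (hRs : ∀ (x : lp (fun _ : ℕ => K) 2) (n : ℕ), (R x) (n + 1) = x n)

include hR0 hRs

lemma R_norm (x : lp (fun _ : ℕ => K) 2) : ‖R x‖ = ‖x‖ := by
  have hsq : ‖R x‖ ^ 2 = ‖x‖ ^ 2 := by
    rw [norm_sq_eq, norm_sq_eq, Summable.tsum_eq_zero_add (summable_sq (R x))]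
    simp [hR0, hRs]
  have := congrArg Real.sqrt hsq
  rwa [Real.sqrt_sq (norm_nonneg _), Real.sqrt_sq (norm_nonneg _)] at this

lemma Rpow_norm (n : ℕ) : ∀ x : lp (fun _ : ℕ => K) 2, ‖(R ^ n) x‖ = ‖x‖ := by
  induction n with
  | zero => intro x; simp
  | succ n ih =>
    intro x
    rw [pow_succ, ContinuousLinearMap.mul_apply, ih, R_norm R hR0 hRs]

lemma Rpow_apply (n : ℕ) (x : lp (fun _ : ℕ => K) 2) (k : ℕ) :
    ((R ^ n) x) k = if h : n ≤ k then x (k - n) else 0 := by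
  induction n generalizing k with
  | zero => simp
  | succ n ih =>
    rw [pow_succ', ContinuousLinearMap.mul_apply]
    cases k with
    | zero => simp [hR0]
    | succ m =>
      rw [hRs, ih]
      by_cases h : n ≤ m
      · rw [dif_pos h, dif_pos (Nat.succ_le_succ h), Nat.succ_sub_succ]
      · rw [dif_neg h, dif_neg (fun hc => h (Nat.le_of_succ_le_succ hc))]

lemma Rpow_weak_null (x w : lp (fun _ : ℕ => K) 2) :
    Tendsto (fun n => (inner ℂ ((R ^ n) x) w : ℂ)) atTop (𝓝 0) := by
  -- tail elements
  have hmem : ∀ n : ℕ, Memℓp (fun m : ℕ => w (m + n)) (2 : ℝ≥0∞) := by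
    intro n
    apply memℓp_of_summable_sq
    exact (summable_sq w).comp_injective (add_left_injective n)
  set z : ℕ → lp (fun _ : ℕ => K) 2 := fun n => ⟨fun m => w (m + n), hmem n⟩ with hz
  have hzc : ∀ n m, (z n) m = w (m + n) := fun n m => rfl
  have hinner : ∀ n, (inner ℂ ((R ^ n) x) w : ℂ) = inner ℂ x (z n) := by
    intro n
    rw [lp.inner_eq_tsum, lp.inner_eq_tsum]
    have hsupp : Function.support (fun k => (inner ℂ (((R ^ n) x) k) (w k) : ℂ)) ⊆
        Set.range (fun m : ℕ => m + n) := by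
      intro k hk
      by_contra hrange
      apply hk
      have hlt : ¬ n ≤ k := by
        intro hle
        exact hrange ⟨k - n, Nat.sub_add_cancel hle⟩
      simp only [Rpow_apply R hR0 hRs, dif_neg hlt, inner_zero_left]
    rw [← Function.Injective.tsum_eq (add_left_injective n) hsupp]
    apply tsum_congr
    intro m
    simp only [Rpow_apply R hR0 hRs, dif_pos (Nat.le_add_left n m), Nat.add_sub_cancel, hzc]
  simp only [hinner]
  -- ‖z n‖ → 0
  have htail : Tendsto (fun n => ∑' m, ‖w (m + n)‖ ^ 2) atTop (𝓝 0) :=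
    tendsto_sum_nat_add (fun k => ‖w k‖ ^ 2)
  have hznorm : Tendsto (fun n => ‖z n‖) atTop (𝓝 0) := by
    have h1 : ∀ n, ‖z n‖ = Real.sqrt (∑' m, ‖w (m + n)‖ ^ 2) := by
      intro n
      rw [← norm_sq_eq (z n)]
      · exact (Real.sqrt_sq (norm_nonneg _)).symm
    simp only [h1]
    have := (Real.continuous_sqrt.tendsto 0).comp htail
    simpa [Function.comp_def] using this
  refine squeeze_zero_norm (fun n => norm_inner_le_norm _ _) (a := fun n => ‖x‖ * ‖z n‖) ?_
  simpa using (tendsto_const_nhds (x := ‖x‖)).mul hznorm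

end Main


lemma compact_tendsto (C : lp (fun _ : ℕ => K) 2 →L[ℂ] lp (fun _ : ℕ => K) 2)
    (hC : IsCompactOperator C) (y : ℕ → lp (fun _ : ℕ => K) 2) (M : ℝ)
    (hb : ∀ n, ‖y n‖ ≤ M)
    (hw : ∀ w, Tendsto (fun n => (inner ℂ (y n) w : ℂ)) atTop (𝓝 0)) :
    Tendsto (fun n => C (y n)) atTop (𝓝 0) := by
  have hbdd : Bornology.IsBounded (Set.range y) := by
    rw [isBounded_iff_forall_norm_le]
    exact ⟨M, by rintro v ⟨n, rfl⟩; exact hb n⟩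
  have hK : IsCompact (closure (C '' Set.range y)) := by
    exact IsCompactOperator.isCompact_closure_image_of_bounded
      (f := (C : lp (fun _ : ℕ => K) 2 →ₗ[ℂ] lp (fun _ : ℕ => K) 2)) hC hbdd
  apply tendsto_of_subseq_tendsto
  intro ns hns
  obtain ⟨z, hzS, φ, hφ, hφt⟩ := hK.tendsto_subseq
    (x := fun n => C (y (ns n)))
    (fun n => subset_closure ⟨y (ns n), ⟨ns n, rfl⟩, rfl⟩)
  have hz0 : z = 0 := by
    have h1 : Tendsto (fun n => (inner ℂ (C (y (ns (φ n)))) z : ℂ)) atTop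
        (𝓝 (inner ℂ z z)) := hφt.inner tendsto_const_nhds
    have h2 : Tendsto (fun n => (inner ℂ (C (y (ns (φ n)))) z : ℂ)) atTop (𝓝 0) := by
      have h3 := (hw (ContinuousLinearMap.adjoint C z)).comp
        (hns.comp hφ.tendsto_atTop)
      refine h3.congr fun n => ?_
      exact ContinuousLinearMap.adjoint_inner_right C _ z
    have h4 : (inner ℂ z z : ℂ) = 0 := tendsto_nhds_unique h1 h2
    exact inner_self_eq_zero.mp h4
  exact ⟨φ, hz0 ▸ hφt⟩

end Stmt13Aux

/-- On `H = ℓ²(ℤ₊, K)` with the isometric shift `R(x₀,x₁,…) = (0,x₀,x₁,…)`,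
any operator `A` commuting with `R` has norm equal to its essential norm
`inf{‖A + C‖ : C compact}`; in particular the only compact operator commuting
with `R` is `0`. -/
theorem stmt13_norm_eq_essential_norm
    {K : Type*} [NormedAddCommGroup K] [InnerProductSpace ℂ K] [CompleteSpace K]
    (R : lp (fun _ : ℕ => K) 2 →L[ℂ] lp (fun _ : ℕ => K) 2)
    (hR0 : ∀ x : lp (fun _ : ℕ => K) 2, (R x) 0 = 0)
    (hRs : ∀ (x : lp (fun _ : ℕ => K) 2) (n : ℕ), (R x) (n + 1) = x n)
    (A : lp (fun _ : ℕ => K) 2 →L[ℂ] lp (fun _ : ℕ => K) 2)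
    (hA : A ∘L R = R ∘L A) :
    ‖A‖ = sInf {r : ℝ | ∃ C : lp (fun _ : ℕ => K) 2 →L[ℂ] lp (fun _ : ℕ => K) 2,
        IsCompactOperator C ∧ r = ‖A + C‖} ∧
      (IsCompactOperator A → A = 0) := by
  have key : ∀ C : lp (fun _ : ℕ => K) 2 →L[ℂ] lp (fun _ : ℕ => K) 2,
      IsCompactOperator C → ‖A‖ ≤ ‖A + C‖ := by
    intro C hC
    refine ContinuousLinearMap.opNorm_le_bound _ (norm_nonneg _) fun x => ?_
    have hcomm : ∀ n : ℕ, ∀ v, A ((R ^ n) v) = (R ^ n) (A v) := by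
      intro n
      induction n with
      | zero => intro v; simp
      | succ n ih =>
        intro v
        have hA' := ContinuousLinearMap.ext_iff.mp hA ((R ^ n) v)
        simp only [ContinuousLinearMap.comp_apply] at hA'
        rw [pow_succ', ContinuousLinearMap.mul_apply, ContinuousLinearMap.mul_apply,
          hA', ih]
    have hCy := Stmt13Aux.compact_tendsto C hC (fun n => (R ^ n) x) ‖x‖
      (fun n => le_of_eq (Stmt13Aux.Rpow_norm R hR0 hRs n x))
      (fun w => Stmt13Aux.Rpow_weak_null R hR0 hRs x w)
    have hbound : ∀ n : ℕ, ‖A x‖ ≤ ‖A + C‖ * ‖x‖ + ‖C ((R ^ n) x)‖ := by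
      intro n
      have h1 : ‖A x‖ = ‖A ((R ^ n) x)‖ := by
        rw [hcomm n x, Stmt13Aux.Rpow_norm R hR0 hRs]
      have h2 : A ((R ^ n) x) = (A + C) ((R ^ n) x) - C ((R ^ n) x) := by simp
      rw [h1, h2]
      calc ‖(A + C) ((R ^ n) x) - C ((R ^ n) x)‖
          ≤ ‖(A + C) ((R ^ n) x)‖ + ‖C ((R ^ n) x)‖ := norm_sub_le _ _
        _ ≤ ‖A + C‖ * ‖(R ^ n) x‖ + ‖C ((R ^ n) x)‖ := by
            exact add_le_add ((A + C).le_opNorm _) le_rfl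
        _ = ‖A + C‖ * ‖x‖ + ‖C ((R ^ n) x)‖ := by
            rw [Stmt13Aux.Rpow_norm R hR0 hRs]
    have hlim : Filter.Tendsto (fun n => ‖A + C‖ * ‖x‖ + ‖C ((R ^ n) x)‖)
        Filter.atTop (nhds (‖A + C‖ * ‖x‖)) := by
      have h5 : Filter.Tendsto (fun n => ‖C ((R ^ n) x)‖) Filter.atTop (nhds 0) := by
        have := hCy.norm
        rwa [norm_zero] at this
      have h6 := (tendsto_const_nhds (x := ‖A + C‖ * ‖x‖)).add h5
      rwa [add_zero] at h6
    exact ge_of_tendsto hlim (Filter.Eventually.of_forall hbound)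
  have hzero_mem : ‖A‖ ∈ {r : ℝ | ∃ C : lp (fun _ : ℕ => K) 2 →L[ℂ] lp (fun _ : ℕ => K) 2,
      IsCompactOperator C ∧ r = ‖A + C‖} := ⟨0, isCompactOperator_zero, by rw [add_zero]⟩
  constructor
  · apply le_antisymm
    · apply le_csInf ⟨‖A‖, hzero_mem⟩
      rintro r ⟨C, hC, rfl⟩
      exact key C hC
    · exact csInf_le ⟨0, by rintro r ⟨C, hC, rfl⟩; exact norm_nonneg _⟩ hzero_mem
  · intro hAc
    have h1 : IsCompactOperator (⇑(-A)) := by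
      have := hAc.neg
      simpa using this
    have h2 := key (-A) h1
    simp only [add_neg_cancel, norm_zero] at h2
    exact norm_le_zero_iff.mp h2
end
end

section
/- Let λ = e^{2πiθ} with θ irrational, S the unilateral shift on H² and V ∈ B(H²) the composition operator (Vf)(z) = f(λz). If a closed subspace K ⊆ H² is invariant under both S and SV, then K is invariant under V, and consequently K = z^k H² for some k ∈ ℤ₊ (or K = {0}). -/
noncomputable section

open Submodule Filter Finset
open scoped ComplexConjugate Topology ENNReal

namespace Stmt18

local notation "⟪" x ", " y "⟫" => @inner ℂ _ _ x y

section Helpers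

variable {ι : Type*} {H : Type*} {H₂ : Type*} [NormedAddCommGroup H] [InnerProductSpace ℂ H]
  [NormedAddCommGroup H₂] [InnerProductSpace ℂ H₂]

open Classical in
lemma basis_inner (bb : HilbertBasis ι ℂ H) (i j : ι) :
    ⟪bb i, bb j⟫ = if i = j then 1 else 0 :=
  orthonormal_iff_ite.mp bb.orthonormal i j

lemma ext_clm_apply (bb : HilbertBasis ι ℂ H) {A B : H →L[ℂ] H₂}
    (h : ∀ i, A (bb i) = B (bb i)) (x : H) : A x = B x := by
  have hd : Dense ((span ℂ (Set.range ⇑bb) : Submodule ℂ H) : Set H) :=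
    Submodule.dense_iff_topologicalClosure_eq_top.mpr bb.dense_span
  have : A = B := ContinuousLinearMap.ext_on hd (by rintro y ⟨i, rfl⟩; exact h i)
  rw [this]

lemma ext_vec (bb : HilbertBasis ι ℂ H) {x y : H}
    (h : ∀ i, ⟪bb i, x⟫ = ⟪bb i, y⟫) : x = y := by
  apply bb.repr.injective
  apply lp.ext
  funext i
  have hx := bb.repr_apply_apply x i
  have hy := bb.repr_apply_apply y i
  show bb.repr x i = bb.repr y i
  rw [hx, hy, h i]

lemma mem_of_coords (bb : HilbertBasis ι ℂ H) {S : Submodule ℂ H}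
    (hS : IsClosed (S : Set H)) {x : H}
    (h : ∀ i, bb i ∈ S ∨ ⟪bb i, x⟫ = 0) : x ∈ S := by
  have hsum := bb.hasSum_repr x
  refine hS.mem_of_tendsto hsum (Eventually.of_forall fun s => ?_)
  refine Submodule.sum_mem _ fun i _ => ?_
  rcases h i with hi | hi
  · exact Submodule.smul_mem _ _ hi
  · rw [bb.repr_apply_apply, hi, zero_smul]; exact Submodule.zero_mem _

lemma parseval (bb : HilbertBasis ι ℂ H) (x : H) :
    ‖x‖ ^ 2 = ∑' i, ‖⟪bb i, x⟫‖ ^ 2 := by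
  have h := lp.norm_rpow_eq_tsum (p := 2) (by norm_num) (bb.repr x)
  have h2 : ((2 : ℝ≥0∞)).toReal = (2 : ℝ) := by norm_num
  rw [h2] at h
  have hn : ‖bb.repr x‖ = ‖x‖ := bb.repr.norm_map x
  rw [hn] at h
  have hc : ∀ i, ‖bb.repr x i‖ = ‖⟪bb i, x⟫‖ := fun i => by rw [bb.repr_apply_apply]
  calc ‖x‖ ^ 2 = ‖x‖ ^ (2 : ℝ) := by
        rw [← Real.rpow_natCast ‖x‖ 2]; norm_num
    _ = ∑' i, ‖bb.repr x i‖ ^ (2 : ℝ) := h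
    _ = ∑' i, ‖⟪bb i, x⟫‖ ^ 2 := by
        refine tsum_congr fun i => ?_
        rw [hc i, ← Real.rpow_natCast ‖⟪bb i, x⟫‖ 2]; norm_num

end Helpers

section Generic

variable {ι : Type*} {H₁ H₂ : Type*} [NormedAddCommGroup H₁] [InnerProductSpace ℂ H₁]
  [NormedAddCommGroup H₂] [InnerProductSpace ℂ H₂] [CompleteSpace H₁] [CompleteSpace H₂]

variable (bb : HilbertBasis ι ℂ H₁) {v : ι → H₂} (hv : Orthonormal ℂ v)

/-- The "coefficient" (analysis) map `u ↦ (⟪v i, u⟫)ᵢ` realized inside `H₁` via the basis. -/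
def coefMap : H₂ →L[ℂ] H₁ := by
  refine LinearMap.mkContinuous
    { toFun := fun u => bb.repr.symm
        ⟨fun i => ⟪v i, u⟫, memℓp_gen (by
          have := hv.inner_products_summable (x := u)
          refine this.congr fun i => ?_
          have h2 : ((2 : ℝ≥0∞)).toReal = (2 : ℝ) := by norm_num
          rw [h2, ← Real.rpow_natCast ‖⟪v i, u⟫‖ 2]
          norm_num)⟩
      map_add' := ?_
      map_smul' := ?_ } 1 ?_
  · intro u₁ u₂
    rw [← LinearIsometryEquiv.map_add]
    congr 1
    apply lp.ext
    funext i
    simp [inner_add_right, lp.coeFn_add, Pi.add_apply]; rfl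
  · intro a u
    rw [← LinearIsometryEquiv.map_smul]
    congr 1
    apply lp.ext
    funext i
    simp [inner_smul_right, lp.coeFn_smul, Pi.smul_apply]
  · intro u
    rw [one_mul]
    simp only [LinearMap.coe_mk, AddHom.coe_mk]
    rw [LinearIsometryEquiv.norm_map]
    have hb := hv.tsum_inner_products_le (x := u)
    set y : lp (fun _ : ι => ℂ) 2 := ⟨fun i => ⟪v i, u⟫, _⟩ with hy
    have hny : ‖y‖ ^ (2:ℝ) = ∑' i, ‖y i‖ ^ (2:ℝ) := by
      have := lp.norm_rpow_eq_tsum (p := 2) (by norm_num) y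
      simpa using this
    have hyy : ∑' i, ‖y i‖ ^ (2:ℝ) = ∑' i, ‖⟪v i, u⟫‖ ^ 2 := by
      refine tsum_congr fun i => ?_
      have : y i = ⟪v i, u⟫ := rfl
      rw [this, ← Real.rpow_natCast ‖⟪v i, u⟫‖ 2]; norm_num
    have hsq : ‖y‖ ^ (2:ℝ) ≤ ‖u‖ ^ (2:ℝ) := by
      rw [hny, hyy]
      calc ∑' i, ‖⟪v i, u⟫‖ ^ 2 ≤ ‖u‖ ^ 2 := hb
        _ = ‖u‖ ^ (2:ℝ) := by rw [← Real.rpow_natCast ‖u‖ 2]; norm_num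
    have e1 : ‖y‖ ^ (2:ℝ) = ‖y‖ ^ (2:ℕ) := by rw [← Real.rpow_natCast ‖y‖ 2]; norm_num
    have e2 : ‖u‖ ^ (2:ℝ) = ‖u‖ ^ (2:ℕ) := by rw [← Real.rpow_natCast ‖u‖ 2]; norm_num
    rw [e1, e2] at hsq
    exact (pow_le_pow_iff_left₀ (norm_nonneg y) (norm_nonneg u) two_ne_zero).mp hsq

lemma coefMap_coord (u : H₂) (i : ι) : ⟪bb i, coefMap bb hv u⟫ = ⟪v i, u⟫ := by
  rw [← bb.repr_apply_apply]
  show (bb.repr (bb.repr.symm ⟨fun i => ⟪v i, u⟫, _⟩)) i = _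
  rw [LinearIsometryEquiv.apply_symm_apply]

/-- The synthesis map: the adjoint of `coefMap`; sends `bb i ↦ v i`. -/
def synthMap : H₁ →L[ℂ] H₂ := ContinuousLinearMap.adjoint (coefMap bb hv)

lemma synthMap_inner (x : H₁) (u : H₂) : ⟪synthMap bb hv x, u⟫ = ⟪x, coefMap bb hv u⟫ :=
  ContinuousLinearMap.adjoint_inner_left _ _ _

lemma synthMap_basis (i : ι) : synthMap bb hv (bb i) = v i := by
  refine ext_inner_right ℂ fun u => ?_
  rw [synthMap_inner, coefMap_coord]

lemma coefMap_synthMap (x : H₁) : coefMap bb hv (synthMap bb hv x) = x := by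
  classical
  refine ext_clm_apply bb (A := (coefMap bb hv).comp (synthMap bb hv))
    (B := ContinuousLinearMap.id ℂ H₁) (fun i => ?_) x
  show coefMap bb hv (synthMap bb hv (bb i)) = bb i
  rw [synthMap_basis]
  refine ext_vec bb fun s => ?_
  rw [coefMap_coord]
  rw [orthonormal_iff_ite.mp hv s i, orthonormal_iff_ite.mp bb.orthonormal s i]

lemma synthMap_inner_map (x y : H₁) :
    ⟪synthMap bb hv x, synthMap bb hv y⟫ = ⟪x, y⟫ := by
  rw [synthMap_inner, coefMap_synthMap]

lemma synthMap_norm (x : H₁) : ‖synthMap bb hv x‖ = ‖x‖ := by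
  have h2 : ‖synthMap bb hv x‖ ^ 2 = ‖x‖ ^ 2 := by
    rw [← @inner_self_eq_norm_sq ℂ, ← @inner_self_eq_norm_sq ℂ, synthMap_inner_map]
  nlinarith [norm_nonneg (synthMap bb hv x), norm_nonneg x]

lemma synthMap_isometry : Isometry (synthMap bb hv) :=
  AddMonoidHomClass.isometry_of_norm _ (synthMap_norm bb hv)

lemma synthMap_injective : Function.Injective (synthMap bb hv) :=
  (synthMap_isometry bb hv).injective

end Generic

section Bilateral

/-- The bilateral sequence space `ℓ²(ℤ)`. -/
abbrev Zl : Type := lp (fun _ : ℤ => ℂ) 2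

/-- The canonical Hilbert basis of `ℓ²(ℤ)`. -/
def cZ : HilbertBasis ℤ ℂ Zl := HilbertBasis.ofRepr (LinearIsometryEquiv.refl ℂ _)

lemma shift_family_orthonormal (m : ℤ) : Orthonormal ℂ (fun n : ℤ => cZ (n + m)) :=
  cZ.orthonormal.comp (fun n : ℤ => n + m) (add_left_injective m)

/-- Translation by `m` on `ℓ²(ℤ)`: `cZ n ↦ cZ (n + m)`. -/
def Ush (m : ℤ) : Zl →L[ℂ] Zl := synthMap cZ (shift_family_orthonormal m)

lemma Ush_basis (m n : ℤ) : Ush m (cZ n) = cZ (n + m) := synthMap_basis _ _ n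

lemma Ush_add (m m' : ℤ) (x : Zl) : Ush m (Ush m' x) = Ush (m' + m) x := by
  refine ext_clm_apply cZ (A := (Ush m).comp (Ush m')) (B := Ush (m' + m)) (fun n => ?_) x
  show Ush m (Ush m' (cZ n)) = Ush (m' + m) (cZ n)
  rw [Ush_basis, Ush_basis, Ush_basis, add_assoc]

lemma Ush_zero (x : Zl) : Ush 0 x = x := by
  refine ext_clm_apply cZ (A := Ush 0) (B := ContinuousLinearMap.id ℂ Zl) (fun n => ?_) x
  show Ush 0 (cZ n) = cZ n
  rw [Ush_basis, add_zero]

lemma Ush_inner (m : ℤ) (x y : Zl) : ⟪Ush m x, Ush m y⟫ = ⟪x, y⟫ := synthMap_inner_map _ _ _ _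

lemma inner_Ush_left (m : ℤ) (x y : Zl) : ⟪Ush m x, y⟫ = ⟪x, Ush (-m) y⟫ := by
  calc ⟪Ush m x, y⟫ = ⟪Ush (-m) (Ush m x), Ush (-m) y⟫ := (Ush_inner (-m) _ _).symm
    _ = ⟪x, Ush (-m) y⟫ := by rw [Ush_add, add_neg_cancel, Ush_zero]

lemma coord_Ush (m t : ℤ) (x : Zl) : ⟪cZ t, Ush m x⟫ = ⟪cZ (t - m), x⟫ := by
  rw [← Ush_inner m (cZ (t - m)) x, Ush_basis, sub_add_cancel]

lemma Vfam_orthonormal (Λ : ℂ) (hΛn : ‖Λ‖ = 1) :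
    Orthonormal ℂ (fun n : ℤ => Λ ^ n • cZ n) := by
  classical
  rw [orthonormal_iff_ite]
  intro i j
  rw [inner_smul_left, inner_smul_right, basis_inner]
  by_cases h : i = j
  · subst h
    rw [if_pos rfl, if_pos rfl, mul_one]
    have hnorm : ‖Λ ^ i‖ = 1 := by rw [norm_zpow, hΛn, one_zpow]
    have := Complex.mul_conj (Λ ^ i)
    rw [mul_comm] at this
    rw [this, Complex.normSq_eq_norm_sq]
    rw [hnorm]
    norm_num
  · rw [if_neg h, if_neg h, mul_zero, mul_zero]

/-- Diagonal multiplication operator `cZ n ↦ Λ^n • cZ n`. -/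
def VdZ (Λ : ℂ) (hΛn : ‖Λ‖ = 1) : Zl →L[ℂ] Zl := synthMap cZ (Vfam_orthonormal Λ hΛn)

lemma VdZ_basis (Λ : ℂ) (hΛn : ‖Λ‖ = 1) (n : ℤ) :
    VdZ Λ hΛn (cZ n) = Λ ^ n • cZ n := synthMap_basis _ _ n

lemma coord_VdZ (Λ : ℂ) (hΛn : ‖Λ‖ = 1) (t : ℤ) (x : Zl) :
    ⟪cZ t, VdZ Λ hΛn x⟫ = Λ ^ t * ⟪cZ t, x⟫ := by
  classical
  refine ext_clm_apply cZ (A := (innerSL ℂ (cZ t)).comp (VdZ Λ hΛn))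
    (B := (Λ ^ t) • innerSL ℂ (cZ t)) (fun n => ?_) x
  show ⟪cZ t, VdZ Λ hΛn (cZ n)⟫ = Λ ^ t • ⟪cZ t, cZ n⟫
  rw [VdZ_basis, inner_smul_right, basis_inner]
  by_cases h : t = n
  · subst h; simp
  · simp [h]

lemma VdZ_Ush (Λ : ℂ) (hΛn : ‖Λ‖ = 1) (hΛ0 : Λ ≠ 0) (m : ℤ) (x : Zl) :
    VdZ Λ hΛn (Ush m x) = Λ ^ m • Ush m (VdZ Λ hΛn x) := by
  refine ext_clm_apply cZ (A := (VdZ Λ hΛn).comp (Ush m))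
    (B := (Λ ^ m) • ((Ush m).comp (VdZ Λ hΛn))) (fun n => ?_) x
  show VdZ Λ hΛn (Ush m (cZ n)) = Λ ^ m • Ush m (VdZ Λ hΛn (cZ n))
  rw [Ush_basis, VdZ_basis, VdZ_basis, map_smul, Ush_basis, smul_smul, ← zpow_add₀ hΛ0]
  rw [add_comm m n]

end Bilateral

section BilateralMain

set_option maxHeartbeats 1000000 in
lemma bilateral_main {Λ : ℂ} (hΛn : ‖Λ‖ = 1) (hΛ0 : Λ ≠ 0)
    (K' : Submodule ℂ Zl) (hcl : IsClosed (K' : Set Zl)) (k' : ℤ)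
    (hlow : ∀ u ∈ K', ∀ t : ℤ, t < k' → ⟪cZ t, u⟫ = 0)
    (f' : Zl) (hf'K : f' ∈ K') (hf'k : ⟪cZ k', f'⟫ ≠ 0)
    (hU : ∀ u ∈ K', Ush 1 u ∈ K')
    (hUV : ∀ u ∈ K', Ush 1 (VdZ Λ hΛn u) ∈ K') :
    ∀ u ∈ K', VdZ Λ hΛn u ∈ K' := by
  classical
  -- iterated shift invariance
  have hUshNat : ∀ (j : ℕ), ∀ u ∈ K', Ush (j : ℤ) u ∈ K' := by
    intro j
    induction j with
    | zero => intro u hu; rw [Int.natCast_zero, Ush_zero]; exact hu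
    | succ j ih =>
      intro u hu
      have e : Ush 1 (Ush (j : ℤ) u) = Ush ((j : ℤ) + 1) u := Ush_add 1 (j : ℤ) u
      have : ((j + 1 : ℕ) : ℤ) = (j : ℤ) + 1 := by push_cast; ring
      rw [this, ← e]
      exact hU _ (ih u hu)
  -- the shifted submodule D = Ush 1 '' K'
  set D : Submodule ℂ Zl := K'.map (Ush 1 : Zl →ₗ[ℂ] Zl) with hD
  have hDsub : D ≤ K' := by
    rintro d hd
    rcases Submodule.mem_map.mp hd with ⟨u, hu, rfl⟩
    exact hU u hu
  have hUshDz : ∀ (w : ℤ), 1 ≤ w → ∀ u ∈ K', Ush w u ∈ D := by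
    intro w hw u hu
    obtain ⟨i, hi⟩ : ∃ i : ℕ, w = (i : ℤ) + 1 := ⟨(w - 1).toNat, by omega⟩
    have e : Ush 1 (Ush (i : ℤ) u) = Ush ((i : ℤ) + 1) u := Ush_add 1 (i : ℤ) u
    rw [hi, ← e]
    exact Submodule.mem_map_of_mem (hUshNat i u hu)
  have hDcl : IsClosed (D : Set Zl) := by
    have himg : (D : Set Zl) = (Ush 1) '' (K' : Set Zl) := Submodule.map_coe _ _
    rw [himg]
    have hiso : Isometry (Ush 1) := synthMap_isometry _ _
    exact ((isComplete_image_iff hiso.isUniformInducing).mpr hcl.isComplete).isClosed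
  haveI : CompleteSpace D := hDcl.completeSpace_coe
  -- the wandering vector
  set w0 : Zl := f' - (orthogonalProjection D f' : Zl) with hw0
  have hw0K : w0 ∈ K' := Submodule.sub_mem _ hf'K (hDsub (SetLike.coe_mem _))
  have hw0orth : w0 ∈ Dᗮ := Submodule.sub_starProjection_mem_orthogonal (K := D) f'
  have hw0perp : ∀ d ∈ D, ⟪w0, d⟫ = 0 := fun d hd =>
    (Submodule.mem_orthogonal' D w0).mp hw0orth d hd
  have hw0k : ⟪cZ k', w0⟫ = ⟪cZ k', f'⟫ := by
    rw [hw0, inner_sub_right]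
    have hz : ⟪cZ k', (orthogonalProjection D f' : Zl)⟫ = 0 := by
      rcases Submodule.mem_map.mp (SetLike.coe_mem (orthogonalProjection D f')) with ⟨u, hu, he⟩
      simp only [ContinuousLinearMap.coe_coe] at he
      rw [← he, coord_Ush]
      exact hlow u hu _ (by omega)
    rw [hz, sub_zero]
  have hw0ne : w0 ≠ 0 := fun h => hf'k (by rw [← hw0k, h, inner_zero_right])
  have hw0norm : (‖w0‖ : ℂ) ≠ 0 :=
    Complex.ofReal_ne_zero.mpr (norm_ne_zero_iff.mpr hw0ne)
  set φ : Zl := (‖w0‖ : ℂ)⁻¹ • w0 with hφdef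
  have hφK : φ ∈ K' := Submodule.smul_mem _ _ hw0K
  have hφperp : ∀ d ∈ D, ⟪φ, d⟫ = 0 := fun d hd => by
    rw [hφdef, inner_smul_left, hw0perp d hd, mul_zero]
  have hφnorm : ‖φ‖ = 1 := by
    rw [hφdef, norm_smul, norm_inv, Complex.norm_real, Real.norm_eq_abs, abs_norm,
      inv_mul_cancel₀ (norm_ne_zero_iff.mpr hw0ne)]
  have hφk : ⟪cZ k', φ⟫ ≠ 0 := by
    rw [hφdef, inner_smul_right, hw0k]
    exact mul_ne_zero (inv_ne_zero hw0norm) hf'k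
  have hφlow : ∀ t : ℤ, t < k' → ⟪cZ t, φ⟫ = 0 := fun t ht => hlow φ hφK t ht
  have hφself : ⟪φ, φ⟫ = 1 := by
    rw [inner_self_eq_norm_sq_to_K (𝕜 := ℂ), hφnorm]
    norm_num
  -- the translates of φ are orthonormal
  set χ : ℤ → Zl := fun s => Ush s φ with hχ
  have hwander : ∀ w : ℤ, ⟪φ, Ush w φ⟫ = if w = 0 then 1 else 0 := by
    intro w
    rcases lt_trichotomy w 0 with hw | hw | hw
    · rw [if_neg (by omega)]
      have h2 : ⟪Ush w φ, φ⟫ = ⟪φ, Ush (-w) φ⟫ := inner_Ush_left w φ φ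
      have h3 : ⟪φ, Ush (-w) φ⟫ = 0 := hφperp _ (hUshDz (-w) (by omega) φ hφK)
      calc ⟪φ, Ush w φ⟫ = conj ⟪Ush w φ, φ⟫ := (inner_conj_symm _ _).symm
        _ = 0 := by rw [h2, h3, map_zero]
    · rw [hw, if_pos rfl, Ush_zero, hφself]
    · rw [if_neg (by omega)]
      exact hφperp _ (hUshDz w (by omega) φ hφK)
  have hχon : Orthonormal ℂ χ := by
    rw [orthonormal_iff_ite]
    intro r t
    have e : ⟪χ r, χ t⟫ = ⟪φ, Ush (t - r) φ⟫ := by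
      rw [hχ]
      dsimp only
      rw [← Ush_inner (-r) (Ush r φ) (Ush t φ), Ush_add, Ush_add, add_neg_cancel, Ush_zero,
        ← sub_eq_add_neg]
    rw [e, hwander]
    by_cases h : r = t
    · rw [if_pos h, if_pos (by omega)]
    · rw [if_neg h, if_neg (by omega)]
  -- synthesis and analysis operators attached to the translates
  set J : Zl →L[ℂ] Zl := synthMap cZ hχon with hJ
  set J' : Zl →L[ℂ] Zl := coefMap cZ hχon with hJ'
  have hJb : ∀ s, J (cZ s) = χ s := fun s => synthMap_basis cZ hχon s
  have hJ'c : ∀ (u : Zl) (s : ℤ), ⟪cZ s, J' u⟫ = ⟪χ s, u⟫ := fun u s => coefMap_coord cZ hχon u s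
  have hJ'J : ∀ x : Zl, J' (J x) = x := fun x => coefMap_synthMap cZ hχon x
  set φc : ℤ → ℂ := fun t => ⟪cZ t, φ⟫ with hφc
  have hχcoord : ∀ s t : ℤ, ⟪cZ t, χ s⟫ = φc (t - s) := by
    intro s t
    rw [hχ]
    dsimp only
    rw [coord_Ush]
  -- the key surjectivity identity J ∘ J' = id
  have hJJ' : ∀ x : Zl, J (J' x) = x := by
    intro x
    refine ext_clm_apply cZ (A := J.comp J') (B := ContinuousLinearMap.id ℂ Zl) (fun m => ?_) x
    show J (J' (cZ m)) = cZ m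
    refine ext_vec cZ fun t => ?_
    set x₀ : Zl := J' (cZ m) with hx₀def
    have hx₀ : ∀ s, ⟪cZ s, x₀⟫ = conj (φc (m - s)) := by
      intro s
      rw [hx₀def, hJ'c, ← inner_conj_symm, hχcoord]
    have hsum2 : HasSum (fun s => (cZ.repr x₀ s) • χ s) (J x₀) := by
      have h0 := (cZ.hasSum_repr x₀).mapL J
      refine h0.congr_fun fun s => ?_
      rw [map_smul, hJb]
    have hsum3 : HasSum (fun s => (cZ.repr x₀ s) * ⟪cZ t, χ s⟫) ⟪cZ t, J x₀⟫ := by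
      have h0 := hsum2.mapL (innerSL ℂ (cZ t))
      refine h0.congr_fun fun s => ?_
      show (cZ.repr x₀ s) * ⟪cZ t, χ s⟫ = ⟪cZ t, (cZ.repr x₀ s) • χ s⟫
      rw [inner_smul_right]
    have h1 : ⟪cZ t, J x₀⟫ = ∑' s, conj (φc (m - s)) * φc (t - s) := by
      rw [← hsum3.tsum_eq]
      refine tsum_congr fun s => ?_
      rw [cZ.repr_apply_apply, hx₀ s, hχcoord]
    have h2 : ∑' s, conj (φc (m - s)) * φc (t - s)
        = ∑' s, conj (φc (s - t)) * φc (s - m) := by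
      have he := Equiv.tsum_eq (Equiv.subLeft (m + t))
        (fun s => conj (φc (s - t)) * φc (s - m))
      rw [← he]
      refine tsum_congr fun s => ?_
      have e1 : m + t - s - t = m - s := by ring
      have e2 : m + t - s - m = t - s := by ring
      simp only [Equiv.subLeft_apply]
      rw [e1, e2]
    have h3 : ⟪χ t, χ m⟫ = ∑' s, conj (φc (s - t)) * φc (s - m) := by
      rw [← cZ.tsum_inner_mul_inner (χ t) (χ m)]
      refine tsum_congr fun s => ?_
      rw [hχcoord, ← inner_conj_symm (x := χ t) (y := cZ s), hχcoord]
    show ⟪cZ t, J x₀⟫ = ⟪cZ t, cZ m⟫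
    rw [h1, h2, ← h3, orthonormal_iff_ite.mp hχon t m, basis_inner]
    rcases eq_or_ne t m with he | he
    · rw [if_pos he, if_pos he]
    · rw [if_neg he, if_neg he]
  -- coordinates of J' of elements of K' vanish at negative indices
  have hK'neg : ∀ u ∈ K', ∀ s : ℤ, s < 0 → ⟪cZ s, J' u⟫ = 0 := by
    intro u hu s hs
    rw [hJ'c, hχ]
    dsimp only
    rw [inner_Ush_left]
    exact hφperp _ (hUshDz (-s) (by omega) u hu)
  -- ψ = Ush 1 (Vd φ) ∈ K' and h = J' ψ
  set ψ : Zl := Ush 1 (VdZ Λ hΛn φ) with hψdef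
  have hψK : ψ ∈ K' := hUV φ hφK
  set h : Zl := J' ψ with hh
  have hhJ : J h = ψ := hJJ' ψ
  have hhneg : ∀ s : ℤ, s < 0 → ⟪cZ s, h⟫ = 0 := fun s hs => hK'neg ψ hψK s hs
  have hψk : ⟪cZ k', ψ⟫ = 0 := by
    rw [hψdef, coord_Ush, coord_VdZ, hφlow (k' - 1) (by omega), mul_zero]
  -- the 0-th coefficient of h vanishes
  have hh0 : ⟪cZ 0, h⟫ = 0 := by
    have hsum2 : HasSum (fun s => (cZ.repr h s) • χ s) (J h) := by
      have h0 := (cZ.hasSum_repr h).mapL J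
      refine h0.congr_fun fun s => ?_
      rw [map_smul, hJb]
    have hsum3 : HasSum (fun s => (cZ.repr h s) * ⟪cZ k', χ s⟫) ⟪cZ k', J h⟫ := by
      have h0 := hsum2.mapL (innerSL ℂ (cZ k'))
      refine h0.congr_fun fun s => ?_
      show (cZ.repr h s) * ⟪cZ k', χ s⟫ = ⟪cZ k', (cZ.repr h s) • χ s⟫
      rw [inner_smul_right]
    have h1 : ⟪cZ k', J h⟫ = ∑' s, (cZ.repr h s) * φc (k' - s) := by
      rw [← hsum3.tsum_eq]
      refine tsum_congr fun s => ?_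
      rw [hχcoord]
    have h2 : ∑' s, (cZ.repr h s) * φc (k' - s) = (cZ.repr h 0) * φc k' := by
      have := tsum_eq_single (L := SummationFilter.unconditional ℤ) (f := fun s => (cZ.repr h s) * φc (k' - s)) 0 ?_
      · rw [this]; norm_num
      · intro s hs
        show cZ.repr h s * φc (k' - s) = 0
        rcases lt_or_gt_of_ne hs with hneg | hpos
        · rw [cZ.repr_apply_apply, hhneg s hneg, zero_mul]
        · rw [hφc]
          dsimp only
          rw [hφlow (k' - s) (by omega), mul_zero]
    have h3 : (cZ.repr h 0) * φc k' = 0 := by rw [← h2, ← h1, hhJ, hψk]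
    rcases mul_eq_zero.mp h3 with h4 | h4
    · rw [← cZ.repr_apply_apply]; exact h4
    · exact absurd h4 hφk
  -- h₁ = Ush (-1) h is supported on nonnegative indices
  set h₁ : Zl := Ush (-1) h with hh₁
  have hh₁neg : ∀ s : ℤ, s < 0 → ⟪cZ s, h₁⟫ = 0 := by
    intro s hs
    rw [hh₁, coord_Ush]
    rcases eq_or_lt_of_le (by omega : s - (-1) ≤ 0) with he | hlt
    · rw [he]; exact hh0
    · exact hhneg _ hlt
  -- J commutes with translations
  have hJUsh : ∀ (m : ℤ) (x : Zl), J (Ush m x) = Ush m (J x) := by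
    intro m x
    refine ext_clm_apply cZ (A := J.comp (Ush m)) (B := (Ush m).comp J) (fun n => ?_) x
    show J (Ush m (cZ n)) = Ush m (J (cZ n))
    rw [Ush_basis, hJb, hJb, hχ]
    dsimp only
    rw [Ush_add]
  -- Vd φ = J h₁
  have hVφ : VdZ Λ hΛn φ = J h₁ := by
    have e1 : Ush (-1) ψ = VdZ Λ hΛn φ := by
      rw [hψdef, Ush_add, show (1 : ℤ) + -1 = 0 by omega]
      exact Ush_zero _
    rw [hh₁, hJUsh, hhJ, e1]
  -- membership criterion for J-images
  have hUshK' : ∀ t : ℤ, 0 ≤ t → ∀ u ∈ K', Ush t u ∈ K' := by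
    intro t ht u hu
    have := hUshNat t.toNat u hu
    rwa [Int.toNat_of_nonneg ht] at this
  have hVφK : VdZ Λ hΛn φ ∈ K' := by
    rw [hVφ]
    have hScl : IsClosed ((K'.comap (J : Zl →ₗ[ℂ] Zl) : Submodule ℂ Zl) : Set Zl) :=
      hcl.preimage J.continuous
    have hmem : h₁ ∈ K'.comap (J : Zl →ₗ[ℂ] Zl) := by
      refine mem_of_coords cZ hScl fun t => ?_
      by_cases ht : 0 ≤ t
      · left
        show J (cZ t) ∈ K'
        rw [hJb, hχ]
        dsimp only
        exact hUshK' t ht φ hφK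
      · right; exact hh₁neg t (by omega)
    exact hmem
  -- final invariance
  intro u hu
  have hxneg := hK'neg u hu
  have hmain : VdZ Λ hΛn (J (J' u)) ∈ K' := by
    have hScl : IsClosed ((K'.comap (((VdZ Λ hΛn).comp J : Zl →L[ℂ] Zl) : Zl →ₗ[ℂ] Zl) : Submodule ℂ Zl) : Set Zl) :=
      hcl.preimage ((VdZ Λ hΛn).comp J).continuous
    have hmem : J' u ∈ K'.comap (((VdZ Λ hΛn).comp J : Zl →L[ℂ] Zl) : Zl →ₗ[ℂ] Zl) := by
      refine mem_of_coords cZ hScl fun t => ?_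
      by_cases ht : 0 ≤ t
      · left
        show VdZ Λ hΛn (J (cZ t)) ∈ K'
        rw [hJb, hχ]
        dsimp only
        rw [VdZ_Ush Λ hΛn hΛ0]
        exact Submodule.smul_mem _ _ (hUshK' t ht _ hVφK)
      · right; exact hxneg t (by omega)
    exact hmem
  rwa [hJJ' u] at hmain

end BilateralMain

section Scalar

lemma lam_norm (θ : ℝ) : ‖Complex.exp (2 * Real.pi * Complex.I * θ)‖ = 1 := by
  rw [Complex.norm_exp]
  have h : (2 * (Real.pi : ℂ) * Complex.I * (θ : ℂ)).re = 0 := by simp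
  rw [h, Real.exp_zero]

lemma lam_zpow_ne_one {θ : ℝ} (hθ : Irrational θ) (r : ℤ) (hr : r ≠ 0) :
    Complex.exp (2 * Real.pi * Complex.I * θ) ^ r ≠ 1 := by
  intro h
  rw [← Complex.exp_int_mul] at h
  rcases Complex.exp_eq_one_iff.mp h with ⟨n, hn⟩
  have hne : (2 * (Real.pi : ℂ) * Complex.I) ≠ 0 := by
    simp [Real.pi_ne_zero, Complex.I_ne_zero, Complex.ofReal_ne_zero]
  have h2 : ((r : ℂ) * (θ : ℂ)) * (2 * (Real.pi : ℂ) * Complex.I)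
      = (n : ℂ) * (2 * (Real.pi : ℂ) * Complex.I) := by
    linear_combination hn
  have h3 : (r : ℂ) * (θ : ℂ) = (n : ℂ) := mul_right_cancel₀ hne h2
  have h4 : (r : ℝ) * θ = (n : ℝ) := by exact_mod_cast h3
  have hrR : (r : ℝ) ≠ 0 := Int.cast_ne_zero.mpr hr
  have h5 : θ = ((n / r : ℚ) : ℝ) := by
    push_cast
    field_simp at h4 ⊢
    linarith [h4]
  exact (hθ.ne_rat _) h5

end Scalar

section Final

variable {E : Type*} [NormedAddCommGroup E] [InnerProductSpace ℂ E] [CompleteSpace E]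

set_option maxHeartbeats 2000000 in
theorem main_thm
    (θ : ℝ) (hθ : Irrational θ)
    (b : HilbertBasis ℕ ℂ E)
    (Sh V : E →L[ℂ] E)
    (hSh : ∀ n : ℕ, Sh (b n) = b (n + 1))
    (hV : ∀ n : ℕ, V (b n) = Complex.exp (2 * Real.pi * Complex.I * θ) ^ n • b n)
    (Ksub : Submodule ℂ E) (hKc : IsClosed (Ksub : Set E))
    (hKS : ∀ f ∈ Ksub, Sh f ∈ Ksub)
    (hKSV : ∀ f ∈ Ksub, Sh (V f) ∈ Ksub) :
    (∀ f ∈ Ksub, V f ∈ Ksub) ∧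
      (Ksub = ⊥ ∨ ∃ k : ℕ, Ksub =
        (Submodule.span ℂ {x : E | ∃ n : ℕ, k ≤ n ∧ x = b n}).topologicalClosure) := by
  classical
  set Λ : ℂ := Complex.exp (2 * Real.pi * Complex.I * θ) with hΛdef
  have hΛn : ‖Λ‖ = 1 := lam_norm θ
  have hΛ0 : Λ ≠ 0 := Complex.exp_ne_zero _
  by_cases hbot : Ksub = ⊥
  · subst hbot
    refine ⟨fun f hf => ?_, Or.inl rfl⟩
    have hf0 : f = 0 := by simpa using hf
    rw [hf0, map_zero]
    exact Submodule.zero_mem _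
  -- a nonzero coefficient exists
  have hex : ∃ n : ℕ, ∃ f ∈ Ksub, ⟪b n, f⟫ ≠ 0 := by
    obtain ⟨f0, hf0K, hf0⟩ := Submodule.ne_bot_iff Ksub |>.mp hbot
    by_contra hno
    push_neg at hno
    refine hf0 (ext_vec b fun n => ?_)
    rw [inner_zero_right]
    exact hno n f0 hf0K
  set k : ℕ := Nat.find hex with hk
  obtain ⟨f0, hf0K, hf0k⟩ := Nat.find_spec hex
  have hminE : ∀ m : ℕ, m < k → ∀ f ∈ Ksub, ⟪b m, f⟫ = 0 := by
    intro m hm f hf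
    by_contra hne
    exact Nat.find_min hex hm ⟨f, hf, hne⟩
  -- embedding into ℓ²(ℤ)
  have honE : Orthonormal ℂ (fun n : ℕ => cZ (n : ℤ)) :=
    cZ.orthonormal.comp (fun n : ℕ => (n : ℤ)) (fun a b h => by simpa using h)
  set ι : E →L[ℂ] Zl := synthMap b honE with hι
  have hιb : ∀ n : ℕ, ι (b n) = cZ (n : ℤ) := fun n => synthMap_basis b honE n
  have hιinj : Function.Injective ι := synthMap_injective b honE
  have hι_Sh : ∀ f : E, ι (Sh f) = Ush 1 (ι f) := by
    intro f
    refine ext_clm_apply b (A := ι.comp Sh) (B := (Ush 1).comp ι) (fun n => ?_) f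
    show ι (Sh (b n)) = Ush 1 (ι (b n))
    have e : ((n + 1 : ℕ) : ℤ) = (n : ℤ) + 1 := by push_cast; ring
    simp only [hSh, hιb, Ush_basis, e]
  have hι_V : ∀ f : E, ι (V f) = VdZ Λ hΛn (ι f) := by
    intro f
    refine ext_clm_apply b (A := ι.comp V) (B := (VdZ Λ hΛn).comp ι) (fun n => ?_) f
    show ι (V (b n)) = VdZ Λ hΛn (ι (b n))
    simp only [hV, map_smul, hιb, VdZ_basis, zpow_natCast]
  -- coordinates of ι
  have hιcoordNat : ∀ (f : E) (m : ℕ), ⟪cZ (m : ℤ), ι f⟫ = ⟪b m, f⟫ := by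
    intro f m
    have hs : HasSum (fun n : ℕ => (b.repr f n) • cZ (n : ℤ)) (ι f) := by
      have h0 := (b.hasSum_repr f).mapL ι
      refine h0.congr_fun fun n => ?_
      rw [map_smul, hιb]
    have hs2 : HasSum (fun n : ℕ => (b.repr f n) * ⟪cZ (m : ℤ), cZ (n : ℤ)⟫)
        ⟪cZ (m : ℤ), ι f⟫ := by
      have h0 := hs.mapL (innerSL ℂ (cZ (m : ℤ)))
      refine h0.congr_fun fun n => ?_
      show (b.repr f n) * ⟪cZ (m : ℤ), cZ (n : ℤ)⟫ = ⟪cZ (m : ℤ), (b.repr f n) • cZ (n : ℤ)⟫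
      rw [inner_smul_right]
    rw [← hs2.tsum_eq, tsum_eq_single m ?_]
    · rw [basis_inner, if_pos rfl, mul_one, b.repr_apply_apply]
    · intro n hn
      rw [basis_inner, if_neg (by exact_mod_cast fun h : (m : ℤ) = (n : ℤ) => hn (by exact_mod_cast h.symm)), mul_zero]
  have hιcoordNeg : ∀ (f : E) (t : ℤ), t < 0 → ⟪cZ t, ι f⟫ = 0 := by
    intro f t ht
    have hs : HasSum (fun n : ℕ => (b.repr f n) • cZ (n : ℤ)) (ι f) := by
      have h0 := (b.hasSum_repr f).mapL ι
      refine h0.congr_fun fun n => ?_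
      rw [map_smul, hιb]
    have hs2 : HasSum (fun n : ℕ => (b.repr f n) * ⟪cZ t, cZ (n : ℤ)⟫) ⟪cZ t, ι f⟫ := by
      have h0 := hs.mapL (innerSL ℂ (cZ t))
      refine h0.congr_fun fun n => ?_
      show (b.repr f n) * ⟪cZ t, cZ (n : ℤ)⟫ = ⟪cZ t, (b.repr f n) • cZ (n : ℤ)⟫
      rw [inner_smul_right]
    rw [← hs2.tsum_eq]
    have : ∀ n : ℕ, (b.repr f n) * ⟪cZ t, cZ (n : ℤ)⟫ = 0 := by
      intro n
      rw [basis_inner, if_neg (by omega), mul_zero]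
    rw [tsum_congr this, tsum_zero]
  -- the transferred submodule
  set K' : Submodule ℂ Zl := Ksub.map (ι : E →ₗ[ℂ] Zl) with hK'
  have hK'cl : IsClosed (K' : Set Zl) := by
    have himg : (K' : Set Zl) = ι '' (Ksub : Set E) := Submodule.map_coe _ _
    rw [himg]
    exact ((isComplete_image_iff (synthMap_isometry b honE).isUniformInducing).mpr
      hKc.isComplete).isClosed
  have hlow : ∀ u ∈ K', ∀ t : ℤ, t < (k : ℤ) → ⟪cZ t, u⟫ = 0 := by
    intro u hu t ht
    rcases Submodule.mem_map.mp hu with ⟨f, hf, rfl⟩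
    simp only [ContinuousLinearMap.coe_coe]
    rcases lt_or_ge t 0 with h0 | h0
    · exact hιcoordNeg f t h0
    · have e : t = ((t.toNat : ℕ) : ℤ) := by omega
      rw [e, hιcoordNat]
      exact hminE t.toNat (by omega) f hf
  have hf'k : ⟪cZ (k : ℤ), ι f0⟫ ≠ 0 := by rw [hιcoordNat]; exact hf0k
  have hUinv : ∀ u ∈ K', Ush 1 u ∈ K' := by
    intro u hu
    rcases Submodule.mem_map.mp hu with ⟨f, hf, rfl⟩
    simp only [ContinuousLinearMap.coe_coe]
    rw [← hι_Sh]
    exact Submodule.mem_map_of_mem (hKS f hf)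
  have hUVinv : ∀ u ∈ K', Ush 1 (VdZ Λ hΛn u) ∈ K' := by
    intro u hu
    rcases Submodule.mem_map.mp hu with ⟨f, hf, rfl⟩
    simp only [ContinuousLinearMap.coe_coe]
    rw [← hι_V, ← hι_Sh]
    exact Submodule.mem_map_of_mem (hKSV f hf)
  have hVinv' := bilateral_main hΛn hΛ0 K' hK'cl (k : ℤ) hlow (ι f0)
    (Submodule.mem_map_of_mem hf0K) hf'k hUinv hUVinv
  have hVinv : ∀ f ∈ Ksub, V f ∈ Ksub := by
    intro f hf
    have h1 := hVinv' (ι f) (Submodule.mem_map_of_mem hf)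
    rw [← hι_V] at h1
    rcases Submodule.mem_map.mp h1 with ⟨g, hg, he⟩
    rwa [← hιinj he]
  refine ⟨hVinv, Or.inr ⟨k, ?_⟩⟩
  -- Cesàro averaging to get b k ∈ Ksub
  have hcoordV : ∀ (n : ℕ) (x : E), ⟪b n, V x⟫ = Λ ^ n * ⟪b n, x⟫ := by
    intro n x
    refine ext_clm_apply b (A := (innerSL ℂ (b n)).comp V)
      (B := (Λ ^ n) • innerSL ℂ (b n)) (fun m => ?_) x
    show ⟪b n, V (b m)⟫ = (Λ ^ n) • ⟪b n, b m⟫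
    simp only [hV, inner_smul_right, basis_inner, smul_eq_mul]
    rcases eq_or_ne n m with he | he
    · rw [if_pos he, mul_one, mul_one, he]
    · rw [if_neg he, mul_zero, mul_zero]
  have hVpow_mem : ∀ (i : ℕ), ∀ f ∈ Ksub, (⇑V)^[i] f ∈ Ksub := by
    intro i
    induction i with
    | zero => intro f hf; simpa using hf
    | succ i ih =>
      intro f hf
      rw [Function.iterate_succ_apply']
      exact hVinv _ (ih f hf)
  have hcoordVpow : ∀ (i n : ℕ) (x : E), ⟪b n, (⇑V)^[i] x⟫ = (Λ ^ n) ^ i * ⟪b n, x⟫ := by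
    intro i
    induction i with
    | zero => intro n x; simp
    | succ i ih =>
      intro n x
      rw [Function.iterate_succ_apply', hcoordV, ih n x, pow_succ]
      ring
  set μ : ℕ → ℂ := fun n => Λ ^ n * (Λ ^ k)⁻¹ with hμ
  have hμnorm : ∀ n, ‖μ n‖ = 1 := by
    intro n
    rw [hμ]
    dsimp only
    rw [norm_mul, norm_inv, norm_pow, norm_pow, hΛn]
    norm_num
  have hμk : μ k = 1 := by
    rw [hμ]
    dsimp only
    exact mul_inv_cancel₀ (pow_ne_zero _ hΛ0)
  have hμne : ∀ n, n ≠ k → μ n ≠ 1 := by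
    intro n hn h1
    have h2 : Λ ^ ((n : ℤ) - (k : ℤ)) = 1 := by
      rw [zpow_sub₀ hΛ0, zpow_natCast, zpow_natCast, div_eq_mul_inv]
      exact h1
    exact lam_zpow_ne_one hθ ((n : ℤ) - (k : ℤ)) (by omega) h2
  set A : ℕ → E := fun N =>
    (N : ℂ)⁻¹ • ∑ i ∈ Finset.range N, ((Λ ^ k)⁻¹) ^ i • (⇑V)^[i] f0 with hA
  have hAK : ∀ N, A N ∈ Ksub := by
    intro N
    rw [hA]
    dsimp only
    exact Submodule.smul_mem _ _ (Submodule.sum_mem _ fun i _ =>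
      Submodule.smul_mem _ _ (hVpow_mem i f0 hf0K))
  have hAcoord : ∀ (N : ℕ) (n : ℕ), ⟪b n, A N⟫
      = ((N : ℂ)⁻¹ * ∑ i ∈ Finset.range N, μ n ^ i) * ⟪b n, f0⟫ := by
    intro N n
    rw [hA]
    dsimp only
    rw [inner_smul_right, inner_sum]
    have e : ∀ i ∈ Finset.range N,
        ⟪b n, ((Λ ^ k)⁻¹) ^ i • (⇑V)^[i] f0⟫ = μ n ^ i * ⟪b n, f0⟫ := by
      intro i _
      rw [inner_smul_right, hcoordVpow, hμ]
      dsimp only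
      rw [mul_pow]
      ring
    rw [Finset.sum_congr rfl e, ← Finset.sum_mul]
    ring
  set xlim : E := ⟪b k, f0⟫ • b k with hxlim
  have hclim1 : ⟪b k, xlim⟫ = ⟪b k, f0⟫ := by
    rw [hxlim, inner_smul_right, basis_inner, if_pos rfl, mul_one]
  have hclim2 : ∀ n : ℕ, n ≠ k → ⟪b n, xlim⟫ = 0 := by
    intro n hn
    rw [hxlim, inner_smul_right, basis_inner, if_neg hn, mul_zero]
  have hcoorderrk : ∀ N : ℕ, ⟪b k, A N - xlim⟫
      = ((N : ℂ)⁻¹ * ∑ i ∈ Finset.range N, μ k ^ i - 1) * ⟪b k, f0⟫ := by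
    intro N
    rw [inner_sub_right, hAcoord, hclim1]
    ring
  have hcoorderrn : ∀ (N n : ℕ), n ≠ k → ⟪b n, A N - xlim⟫
      = ((N : ℂ)⁻¹ * ∑ i ∈ Finset.range N, μ n ^ i) * ⟪b n, f0⟫ := by
    intro N n hn
    rw [inner_sub_right, hAcoord, hclim2 n hn]
    ring
  have hG_bound : ∀ (N : ℕ) (n : ℕ), ‖(N : ℂ)⁻¹ * ∑ i ∈ Finset.range N, μ n ^ i‖ ≤ 1 := by
    intro N n
    rcases Nat.eq_zero_or_pos N with h0 | hpos
    · subst h0; simp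
    · rw [norm_mul, norm_inv, Complex.norm_natCast]
      have h1 : ‖∑ i ∈ Finset.range N, μ n ^ i‖ ≤ (N : ℝ) := by
        calc ‖∑ i ∈ Finset.range N, μ n ^ i‖ ≤ ∑ i ∈ Finset.range N, ‖μ n ^ i‖ :=
              norm_sum_le _ _
          _ = (N : ℝ) := by
              rw [Finset.sum_congr rfl fun i _ => by rw [norm_pow, hμnorm, one_pow]]
              simp
      have hN : (0 : ℝ) < (N : ℝ) := by exact_mod_cast hpos
      calc (N : ℝ)⁻¹ * ‖∑ i ∈ Finset.range N, μ n ^ i‖ ≤ (N : ℝ)⁻¹ * (N : ℝ) :=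
            mul_le_mul_of_nonneg_left h1 (by positivity)
        _ = 1 := inv_mul_cancel₀ (ne_of_gt hN)
  set F : ℕ → ℕ → ℝ := fun N n => ‖⟪b n, A N - xlim⟫‖ ^ 2 with hF
  have hFlim : ∀ n : ℕ, Tendsto (fun N => F N n) atTop (𝓝 0) := by
    intro n
    rcases eq_or_ne n k with he | he
    · subst he
      have hev : ∀ N : ℕ, 1 ≤ N → F N k = 0 := by
        intro N hN
        rw [hF]
        dsimp only
        have hc : ⟪b k, A N - xlim⟫ = 0 := by
          rw [hcoorderrk]
          have e1 : ∑ i ∈ Finset.range N, μ k ^ i = (N : ℂ) := by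
            rw [Finset.sum_congr rfl fun i _ => by rw [hμk, one_pow]]
            simp
          rw [e1, inv_mul_cancel₀ (by exact_mod_cast Nat.one_le_iff_ne_zero.mp hN : (N:ℂ) ≠ 0),
            sub_self, zero_mul]
        rw [hc]
        norm_num
      refine Tendsto.congr' ?_ tendsto_const_nhds
      filter_upwards [eventually_ge_atTop 1] with N hN
      exact (hev N hN).symm
    · have hμn := hμne n he
      have hden : (0:ℝ) < ‖μ n - 1‖ := by
        rw [norm_pos_iff]
        exact sub_ne_zero.mpr hμn
      have hb2 : ∀ N : ℕ, ‖(N : ℂ)⁻¹ * ∑ i ∈ Finset.range N, μ n ^ i‖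
          ≤ (N : ℝ)⁻¹ * (2 / ‖μ n - 1‖) := by
        intro N
        rw [norm_mul, norm_inv, Complex.norm_natCast]
        refine mul_le_mul_of_nonneg_left ?_ (by positivity)
        rw [geom_sum_eq hμn, norm_div]
        have hnum : ‖μ n ^ N - 1‖ ≤ 2 := by
          calc ‖μ n ^ N - 1‖ ≤ ‖μ n ^ N‖ + ‖(1:ℂ)‖ := norm_sub_le _ _
            _ = 2 := by rw [norm_pow, hμnorm, one_pow, norm_one]; norm_num
        gcongr
      have hGlim : Tendsto (fun N : ℕ => ‖(N : ℂ)⁻¹ * ∑ i ∈ Finset.range N, μ n ^ i‖)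
          atTop (𝓝 0) := by
        refine squeeze_zero (fun N => norm_nonneg _) hb2 ?_
        have h4 := tendsto_inv_atTop_nhds_zero_nat.mul_const (2 / ‖μ n - 1‖)
        simpa using h4
      have hFe : ∀ N : ℕ, F N n
          = (‖(N : ℂ)⁻¹ * ∑ i ∈ Finset.range N, μ n ^ i‖ * ‖⟪b n, f0⟫‖) ^ 2 := by
        intro N
        rw [hF]
        dsimp only
        rw [hcoorderrn N n he, norm_mul]
      have hlim2 : Tendsto
          (fun N : ℕ => (‖(N : ℂ)⁻¹ * ∑ i ∈ Finset.range N, μ n ^ i‖ * ‖⟪b n, f0⟫‖) ^ 2)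
          atTop (𝓝 ((0 * ‖⟪b n, f0⟫‖) ^ 2)) := (hGlim.mul_const _).pow 2
      rw [show ((0 : ℝ) * ‖⟪b n, f0⟫‖) ^ 2 = 0 by norm_num] at hlim2
      exact hlim2.congr fun N => (hFe N).symm
  have hsumF : Tendsto (fun N => ∑' n, F N n) atTop (𝓝 0) := by
    have h0 : (0 : ℝ) = ∑' n : ℕ, (0 : ℝ) := tsum_zero.symm
    rw [h0]
    refine tendsto_tsum_of_dominated_convergence
      ((b.orthonormal.inner_products_summable f0).mul_left 4) hFlim
      (Eventually.of_forall fun N n => ?_)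
    rw [Real.norm_eq_abs, abs_of_nonneg (by positivity), hF]
    dsimp only
    rcases eq_or_ne n k with he | he
    · subst he
      rw [hcoorderrk, norm_mul, mul_pow]
      have h2 : ‖(N : ℂ)⁻¹ * ∑ i ∈ Finset.range N, μ k ^ i - 1‖ ≤ 2 := by
        refine (norm_sub_le _ _).trans ?_
        rw [norm_one]
        linarith [hG_bound N k]
      calc ‖(N : ℂ)⁻¹ * ∑ i ∈ Finset.range N, μ k ^ i - 1‖ ^ 2 * ‖⟪b k, f0⟫‖ ^ 2
          ≤ 2 ^ 2 * ‖⟪b k, f0⟫‖ ^ 2 := by gcongr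
        _ = 4 * ‖⟪b k, f0⟫‖ ^ 2 := by norm_num
    · rw [hcoorderrn N n he, norm_mul, mul_pow]
      have h2 : ‖(N : ℂ)⁻¹ * ∑ i ∈ Finset.range N, μ n ^ i‖ ≤ 2 :=
        (hG_bound N n).trans (by norm_num)
      calc ‖(N : ℂ)⁻¹ * ∑ i ∈ Finset.range N, μ n ^ i‖ ^ 2 * ‖⟪b n, f0⟫‖ ^ 2
          ≤ 2 ^ 2 * ‖⟪b n, f0⟫‖ ^ 2 := by gcongr
        _ = 4 * ‖⟪b n, f0⟫‖ ^ 2 := by norm_num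
  have hnormlim : Tendsto (fun N => ‖A N - xlim‖) atTop (𝓝 0) := by
    have h1 : ∀ N, ‖A N - xlim‖ = Real.sqrt (∑' n, F N n) := by
      intro N
      rw [← parseval b (A N - xlim)]
      exact (Real.sqrt_sq (norm_nonneg _)).symm
    have h2 := (Real.continuous_sqrt.tendsto 0).comp hsumF
    rw [Real.sqrt_zero] at h2
    exact h2.congr fun N => (h1 N).symm
  have hAtend : Tendsto A atTop (𝓝 xlim) := by
    rw [tendsto_iff_norm_sub_tendsto_zero]
    exact hnormlim
  have hxlimK : xlim ∈ Ksub := hKc.mem_of_tendsto hAtend (Eventually.of_forall hAK)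
  have hbkK : b k ∈ Ksub := by
    have h1 := Submodule.smul_mem Ksub (⟪b k, f0⟫)⁻¹ hxlimK
    rwa [hxlim, smul_smul, inv_mul_cancel₀ hf0k, one_smul] at h1
  -- conclude the equality
  have hbmem : ∀ n : ℕ, k ≤ n → b n ∈ Ksub := by
    intro n hn
    induction n, hn using Nat.le_induction with
    | base => exact hbkK
    | succ n hn ih =>
      rw [← hSh]
      exact hKS _ ih
  refine le_antisymm ?_ ?_
  · intro f hf
    refine mem_of_coords b (Submodule.isClosed_topologicalClosure _) fun n => ?_
    by_cases hn : k ≤ n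
    · left
      exact Submodule.le_topologicalClosure _ (Submodule.subset_span ⟨n, hn, rfl⟩)
    · right
      exact hminE n (by omega) f hf
  · refine Submodule.topologicalClosure_minimal _ ?_ hKc
    rw [Submodule.span_le]
    rintro x ⟨n, hn, rfl⟩
    exact hbmem n hn

end Final

end Stmt18

/-- Let `λ = e^{2πiθ}` with `θ` irrational, `Sh` the unilateral shift on `H²`
(with orthonormal basis `ζ_n = z^n`, so `Sh ζ_n = ζ_{n+1}`) and `V` the
composition operator `(Vf)(z) = f(λz)` (so `V ζ_n = λⁿ ζ_n`).  If a closed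
subspace `K ⊆ H²` is invariant under `Sh` and `Sh V`, then it is invariant
under `V`, and consequently `K = {0}` or `K = z^k H²` for some `k ≥ 0`. -/
theorem stmt18_invariant_subspaces
    (θ : ℝ) (hθ : Irrational θ)
    {E : Type*} [NormedAddCommGroup E] [InnerProductSpace ℂ E] [CompleteSpace E]
    (b : HilbertBasis ℕ ℂ E)
    (Sh V : E →L[ℂ] E)
    (hSh : ∀ n : ℕ, Sh (b n) = b (n + 1))
    (hV : ∀ n : ℕ, V (b n) = Complex.exp (2 * Real.pi * Complex.I * θ) ^ n • b n)
    (Ksub : Submodule ℂ E) (hKc : IsClosed (Ksub : Set E))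
    (hKS : ∀ f ∈ Ksub, Sh f ∈ Ksub)
    (hKSV : ∀ f ∈ Ksub, Sh (V f) ∈ Ksub) :
    (∀ f ∈ Ksub, V f ∈ Ksub) ∧
      (Ksub = ⊥ ∨ ∃ k : ℕ, Ksub =
        (Submodule.span ℂ {x : E | ∃ n : ℕ, k ≤ n ∧ x = b n}).topologicalClosure) :=
  Stmt18.main_thm θ hθ b Sh V hSh hV Ksub hKc hKS hKSV
end
end
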